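/- arXiv:1107.1248 — 6 statements merged into one kernel-verified Lean document; each statement's English description precedes it below -/
import Mathlib

section
/- Let A be a positive self-adjoint operator on a complex Hilbert space H with dense domain D, and let (A_n)_{n∈ℕ} be a sequence of bounded positive operators on H which is nondecreasing in the Loewner order (⟨x, A_n x⟩ ≤ ⟨x, A_{n+1} x⟩ for all x ∈ H), satisfies ⟨x, A_n x⟩ ≤ ⟨x, A x⟩ for all x ∈ D, and converges weakly to A on D (⟨y, A_n x⟩ → ⟨y, A x⟩ for every x ∈ D and y ∈ H). Then each 1 + A_n has a bounded inverse, and the operators (1 + A_n)^{−1} converge strongly to a bounded operator R which satisfies R((1+A)x) = x for all x ∈ D and, for every y ∈ H, R y ∈ D with (1+A)(R y) = y; that is, the resolvents of the A_n at −1 converge strongly to the resolvent of A at −1. -/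
open scoped ComplexOrder InnerProductSpace
open Filter ContinuousLinearMap

section Aux
variable {H : Type*} [NormedAddCommGroup H] [InnerProductSpace ℂ H] [CompleteSpace H]

lemma aux_isPositive (T : H →L[ℂ] H) (h : ∀ x, 0 ≤ (inner ℂ x (T x) : ℂ)) : T.IsPositive := by
  rw [ContinuousLinearMap.isPositive_iff_complex]
  intro x
  have h0 := h x
  rw [Complex.le_def] at h0
  have hc : ⟪T x, x⟫_ℂ = (starRingEnd ℂ) ⟪x, T x⟫_ℂ := (inner_conj_symm (T x) x).symm
  have him : (⟪x, T x⟫_ℂ).im = 0 := by simpa using h0.2.symm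
  have heq : ⟪T x, x⟫_ℂ = ⟪x, T x⟫_ℂ := by
    rw [hc]; exact Complex.ext (Complex.conj_re _) (by rw [Complex.conj_im, him, neg_zero])
  rw [heq]
  exact ⟨Complex.ext (by simp) (by simp [him]), by simpa using h0.1⟩

lemma aux_nonneg (T : H →L[ℂ] H) (h : ∀ x, 0 ≤ (inner ℂ x (T x) : ℂ)) : (0:H →L[ℂ] H) ≤ T := by
  rw [ContinuousLinearMap.nonneg_iff_isPositive]; exact aux_isPositive T h

lemma aux_sub_nonneg (S T : H →L[ℂ] H)
    (h : ∀ x, (inner ℂ x (S x) : ℂ) ≤ (inner ℂ x (T x) : ℂ)) : S ≤ T := by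
  have := aux_nonneg (T - S) (fun x => by
    simpa [ContinuousLinearMap.sub_apply, inner_sub_right, sub_nonneg] using h x)
  simpa using sub_nonneg.mp (by simpa using this)

set_option synthInstance.maxHeartbeats 1000000 in
lemma aux_norm_sq (T : H →L[ℂ] H) (hT : (0:H →L[ℂ] H) ≤ T) (x : H) :
    ‖T x‖ ^ 2 ≤ ‖T‖ * Complex.re ⟪x, T x⟫_ℂ := by
  set S := CFC.sqrt T with hSdef
  have hS : (0:H →L[ℂ] H) ≤ S := CFC.sqrt_nonneg T
  have hSS : S * S = T := CFC.sqrt_mul_sqrt_self T hT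
  have hSsa : IsSelfAdjoint S := IsSelfAdjoint.of_nonneg hS
  have hadj : ContinuousLinearMap.adjoint S = S := by
    rw [← ContinuousLinearMap.star_eq_adjoint]; exact hSsa
  have h1 : ⟪x, T x⟫_ℂ = ⟪S x, S x⟫_ℂ := by
    rw [← hSS, ContinuousLinearMap.mul_apply, ← ContinuousLinearMap.adjoint_inner_left, hadj]
  have h2 : Complex.re ⟪x, T x⟫_ℂ = ‖S x‖ ^ 2 := by
    rw [h1]; simpa using (inner_self_eq_norm_sq (𝕜 := ℂ) (S x))
  have h3 : ‖T x‖ ≤ ‖S‖ * ‖S x‖ := by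
    rw [← hSS, ContinuousLinearMap.mul_apply]
    exact S.le_opNorm _
  have h4 : ‖S‖ * ‖S‖ = ‖T‖ := by
    rw [← hSS, ← CStarRing.norm_star_mul_self (x := S), hSsa.star_eq]
  calc ‖T x‖ ^ 2 ≤ (‖S‖ * ‖S x‖) ^ 2 := by
        have := norm_nonneg (T x); nlinarith [norm_nonneg (T x)]
    _ = ‖T‖ * Complex.re ⟪x, T x⟫_ℂ := by rw [h2]; rw [mul_pow]; rw [sq ‖S‖, h4]

lemma aux_isUnit (T : H →L[ℂ] H) (h : ∀ x, 0 ≤ (inner ℂ x (T x) : ℂ)) :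
    IsUnit (1 + T) := by
  refine ContinuousLinearMap.isUnit_of_forall_le_norm_inner_map _ (c := 1) one_pos fun x => ?_
  have h0 := h x
  rw [Complex.le_def] at h0
  have : ‖x‖ ^ 2 ≤ Complex.re ⟪(1 + T) x, x⟫_ℂ := by
    have hsym : ⟪T x, x⟫_ℂ = ⟪x, T x⟫_ℂ := (aux_isPositive T h).isSelfAdjoint.isSymmetric x x
    rw [ContinuousLinearMap.add_apply, inner_add_left, ContinuousLinearMap.one_apply]
    rw [Complex.add_re, hsym]
    have h5 : Complex.re ⟪x, x⟫_ℂ = ‖x‖ ^ 2 := by simpa using inner_self_eq_norm_sq (𝕜 := ℂ) x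
    rw [h5]
    have h6 : (0:ℝ) ≤ (⟪x, T x⟫_ℂ).re := by simpa using h0.1
    linarith
  calc ‖x‖ ^ 2 * 1 = ‖x‖ ^ 2 := by ring
    _ ≤ Complex.re ⟪(1 + T) x, x⟫_ℂ := this
    _ ≤ ‖⟪(1 + T) x, x⟫_ℂ‖ := Complex.re_le_norm _

end Aux

set_option maxHeartbeats 1000000 in
/-- Let `A` be a positive self-adjoint (unbounded) operator on a complex
Hilbert space `H` with dense domain, and `(B n)` a sequence of bounded positive operators,
nondecreasing in the Loewner order, dominated by `A` on the domain, and converging weakly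
to `A` on the domain.  Then each `1 + B n` has a bounded inverse, and these inverses
converge strongly to a bounded operator `R` which is the resolvent of `A` at `-1`:
`R ((1+A)x) = x` on the domain and `(1+A)(R y) = y` for all `y`. -/
theorem resolvent_strong_convergence
    {H : Type*} [NormedAddCommGroup H] [InnerProductSpace ℂ H] [CompleteSpace H]
    (A : H →ₗ.[ℂ] H) (hAdense : Dense (A.domain : Set H))
    (hAsa : IsSelfAdjoint A)
    (hApos : ∀ x : A.domain, 0 ≤ (inner ℂ (x : H) (A x) : ℂ))
    (B : ℕ → H →L[ℂ] H)
    (hBpos : ∀ n, ∀ x : H, 0 ≤ (inner ℂ x (B n x) : ℂ))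
    (hBmono : ∀ n, ∀ x : H, (inner ℂ x (B n x) : ℂ) ≤ (inner ℂ x (B (n + 1) x) : ℂ))
    (hBle : ∀ n, ∀ x : A.domain, (inner ℂ (x : H) (B n ↑x) : ℂ) ≤ (inner ℂ (x : H) (A x) : ℂ))
    (hBweak : ∀ x : A.domain, ∀ y : H,
      Filter.Tendsto (fun n => (inner ℂ y (B n ↑x) : ℂ)) Filter.atTop (nhds (inner ℂ y (A x)))) :
    (∀ n, ∃ C : H →L[ℂ] H, C * (1 + B n) = 1 ∧ (1 + B n) * C = 1) ∧
    ∃ R : H →L[ℂ] H,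
      (∀ C : ℕ → H →L[ℂ] H, (∀ n, C n * (1 + B n) = 1 ∧ (1 + B n) * C n = 1) →
        ∀ y : H, Filter.Tendsto (fun n => C n y) Filter.atTop (nhds (R y))) ∧
      (∀ x : A.domain, R ((x : H) + A x) = (x : H)) ∧
      (∀ y : H, ∃ hy : R y ∈ A.domain, R y + A ⟨R y, hy⟩ = y) := by
  classical
  have hBpos' : ∀ n, (B n).IsPositive := fun n => aux_isPositive _ (hBpos n)
  have hB0 : ∀ n, (0:H →L[ℂ] H) ≤ B n := fun n => aux_nonneg _ (hBpos n)
  have hBmono' : Monotone B := monotone_nat_of_le_succ fun n => aux_sub_nonneg _ _ (hBmono n)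
  have hunit : ∀ n, IsUnit (1 + B n) := fun n => aux_isUnit _ (hBpos n)
  set u : ℕ → (H →L[ℂ] H)ˣ := fun n => (hunit n).unit with hu
  set C : ℕ → H →L[ℂ] H := fun n => ↑(u n)⁻¹ with hCdef
  have hu_spec : ∀ n, (u n : H →L[ℂ] H) = 1 + B n := fun n => (hunit n).unit_spec
  have hCl : ∀ n, C n * (1 + B n) = 1 := fun n => by
    rw [← hu_spec n]; exact (u n).inv_mul
  have hCr : ∀ n, (1 + B n) * C n = 1 := fun n => by
    rw [← hu_spec n]; exact (u n).mul_inv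
  -- inner products with 1 + B n
  have h1Binner : ∀ n x, (0:ℂ) ≤ inner ℂ x ((1 + B n) x) := by
    intro n x
    rw [ContinuousLinearMap.add_apply, ContinuousLinearMap.one_apply, inner_add_right]
    refine add_nonneg ?_ (hBpos n x)
    rw [inner_self_eq_norm_sq_to_K]
    norm_cast
    exact Complex.zero_le_real.mpr (sq_nonneg ‖x‖)
  have h1B0 : ∀ n, (0:H →L[ℂ] H) ≤ 1 + B n := fun n => aux_nonneg _ (h1Binner n)
  have hCpos : ∀ n, (0:H →L[ℂ] H) ≤ C n := fun n => by
    refine CFC.inv_nonneg_of_nonneg (u n) ?_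
    rw [hu_spec n]; exact h1B0 n
  have hCanti : ∀ {m n : ℕ}, m ≤ n → C n ≤ C m := by
    intro m n h
    refine CStarAlgebra.inv_le_inv (a := u m) (b := u n) ?_ ?_
    · rw [hu_spec m]; exact h1B0 m
    · rw [hu_spec m, hu_spec n]
      exact add_le_add_right (hBmono' h) 1
  -- applying the inverses
  have hCr' : ∀ n x, (1 + B n) (C n x) = x := fun n x => by
    have h := congrArg (fun T : H →L[ℂ] H => T x) (hCr n)
    simpa [ContinuousLinearMap.mul_apply] using h
  have hBC : ∀ n x, B n (C n x) = x - C n x := fun n x => by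
    have := hCr' n x
    rw [ContinuousLinearMap.add_apply, ContinuousLinearMap.one_apply] at this
    linear_combination (norm := abel) this
  -- norm bound on C n
  have hCnorm : ∀ n x, ‖C n x‖ ≤ ‖x‖ := by
    intro n x
    have hlow : ∀ z : H, ‖z‖ ^ 2 ≤ ‖(1 + B n) z‖ * ‖z‖ := by
      intro z
      have h0 := h1Binner n z
      rw [Complex.le_def] at h0
      have hre : ‖z‖ ^ 2 ≤ Complex.re (inner ℂ z ((1 + B n) z) : ℂ) := by
        rw [ContinuousLinearMap.add_apply, ContinuousLinearMap.one_apply, inner_add_right,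
          Complex.add_re]
        have h5 : Complex.re ⟪z, z⟫_ℂ = ‖z‖ ^ 2 := by
          simpa using inner_self_eq_norm_sq (𝕜 := ℂ) z
        have h6 : (0:ℝ) ≤ (⟪z, B n z⟫_ℂ).re := by
          have := hBpos n z; rw [Complex.le_def] at this; simpa using this.1
        rw [h5]; linarith
      calc ‖z‖ ^ 2 ≤ Complex.re (inner ℂ z ((1 + B n) z) : ℂ) := hre
        _ ≤ ‖(inner ℂ z ((1 + B n) z) : ℂ)‖ := Complex.re_le_norm _
        _ ≤ ‖z‖ * ‖(1 + B n) z‖ := norm_inner_le_norm _ _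
        _ = ‖(1 + B n) z‖ * ‖z‖ := mul_comm _ _
    have := hlow (C n x)
    rw [hCr' n x] at this
    rcases eq_or_lt_of_le (norm_nonneg (C n x)) with h0 | h0
    · rw [← h0]; exact norm_nonneg x
    · nlinarith
  have hCopnorm : ∀ n, ‖C n‖ ≤ 1 := fun n =>
    ContinuousLinearMap.opNorm_le_bound _ zero_le_one (fun x => by simpa using hCnorm n x)
  -- strong convergence of C n
  have key : ∀ x : H, ∃ z : H, Tendsto (fun n => C n x) atTop (nhds z) := by
    intro x
    have hq0 : ∀ n, 0 ≤ Complex.re ⟪x, C n x⟫_ℂ := fun n => by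
      have := ((ContinuousLinearMap.nonneg_iff_isPositive _).mp (hCpos n)).re_inner_nonneg_right x
      simpa using this
    have hq_anti : Antitone (fun n => Complex.re ⟪x, C n x⟫_ℂ) := by
      intro m n hmn
      have hpos : ((C m - C n)).IsPositive := (ContinuousLinearMap.le_def _ _).mp (hCanti hmn)
      have := hpos.re_inner_nonneg_right x
      simp only [ContinuousLinearMap.sub_apply, inner_sub_right, map_sub] at this
      have h2 : (0:ℝ) ≤ Complex.re ⟪x, C m x⟫_ℂ - Complex.re ⟪x, C n x⟫_ℂ := by simpa using this
      linarith
    have hconv : Tendsto (fun n => Complex.re ⟪x, C n x⟫_ℂ) atTop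
        (nhds (⨅ n, Complex.re ⟪x, C n x⟫_ℂ)) :=
      tendsto_atTop_ciInf hq_anti ⟨0, fun r hr => by obtain ⟨n, rfl⟩ := hr; exact hq0 n⟩
    have hqc : CauchySeq (fun n => Complex.re ⟪x, C n x⟫_ℂ) := hconv.cauchySeq
    have main : ∀ a b : ℕ, a ≤ b →
        ‖C a x - C b x‖ ^ 2 ≤ 2 * |Complex.re ⟪x, C a x⟫_ℂ - Complex.re ⟪x, C b x⟫_ℂ| := by
      intro a b hab
      set D := C a - C b with hD
      have hD0 : (0:H →L[ℂ] H) ≤ D := sub_nonneg.mpr (hCanti hab)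
      have hDnorm : ‖D‖ ≤ 2 := by
        calc ‖C a - C b‖ ≤ ‖C a‖ + ‖C b‖ := norm_sub_le _ _
          _ ≤ 1 + 1 := add_le_add (hCopnorm a) (hCopnorm b)
          _ = 2 := by norm_num
      have h1 := aux_norm_sq D hD0 x
      have h2 : Complex.re ⟪x, D x⟫_ℂ
          = Complex.re ⟪x, C a x⟫_ℂ - Complex.re ⟪x, C b x⟫_ℂ := by
        simp [hD, ContinuousLinearMap.sub_apply, inner_sub_right]
      have h3 : (0:ℝ) ≤ Complex.re ⟪x, D x⟫_ℂ := by
        have := ((ContinuousLinearMap.nonneg_iff_isPositive _).mp hD0).re_inner_nonneg_right x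
        simpa using this
      have h4 : D x = C a x - C b x := by simp [hD]
      rw [← h4]
      calc ‖D x‖ ^ 2 ≤ ‖D‖ * Complex.re ⟪x, D x⟫_ℂ := h1
        _ ≤ 2 * Complex.re ⟪x, D x⟫_ℂ := by nlinarith
        _ ≤ 2 * |Complex.re ⟪x, C a x⟫_ℂ - Complex.re ⟪x, C b x⟫_ℂ| := by
            rw [h2] at h3 ⊢; rw [abs_of_nonneg h3]
    have hcs : CauchySeq (fun n => C n x) := by
      rw [Metric.cauchySeq_iff]
      intro ε hε
      obtain ⟨N, hN⟩ := Metric.cauchySeq_iff.mp hqc (ε ^ 2 / 2) (by positivity)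
      refine ⟨N, fun m hm n hn => ?_⟩
      have hdist : ‖C m x - C n x‖ ^ 2 < ε ^ 2 := by
        rcases le_total m n with h | h
        · have := main m n h
          have hq := hN m hm n hn
          rw [Real.dist_eq] at hq
          nlinarith [abs_nonneg (Complex.re ⟪x, C m x⟫_ℂ - Complex.re ⟪x, C n x⟫_ℂ)]
        · have := main n m h
          have hq := hN n hn m hm
          rw [Real.dist_eq] at hq
          have hsymm : ‖C m x - C n x‖ = ‖C n x - C m x‖ := by rw [norm_sub_rev]
          rw [hsymm]
          nlinarith [abs_nonneg (Complex.re ⟪x, C n x⟫_ℂ - Complex.re ⟪x, C m x⟫_ℂ)]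
      rw [dist_eq_norm]
      exact lt_of_pow_lt_pow_left₀ 2 hε.le hdist
    exact cauchySeq_tendsto_of_complete hcs
  choose f hf using key
  let R : H →L[ℂ] H := continuousLinearMapOfTendsto C (f := f) (tendsto_pi_nhds.mpr hf)
  have hR : ∀ x, Tendsto (fun n => C n x) atTop (nhds (R x)) := hf
  have hAdj : A.adjoint = A := LinearPMap.isSelfAdjoint_def.mp hAsa
  -- boundedness of (B n v) for v in the domain
  have hbound : ∀ v : A.domain, ∃ M : ℝ, ∀ n, ‖B n ↑v‖ ≤ M := by
    intro v
    have h1 : ∀ y : H, ∃ Cst : ℝ, ∀ n, ‖(innerSL ℂ (B n ↑v)) y‖ ≤ Cst := by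
      intro y
      have ht : Tendsto (fun n => ‖(inner ℂ y (B n ↑v) : ℂ)‖) atTop
          (nhds ‖(inner ℂ y (A v) : ℂ)‖) := (hBweak v y).norm
      obtain ⟨M, hM⟩ := ht.bddAbove_range
      refine ⟨M, fun n => ?_⟩
      have : ‖(innerSL ℂ (B n ↑v)) y‖ = ‖(inner ℂ y (B n ↑v) : ℂ)‖ := by
        simp [innerSL_apply_apply, norm_inner_symm]
      rw [this]
      exact hM ⟨n, rfl⟩
    obtain ⟨M, hM⟩ := banach_steinhaus h1
    exact ⟨M, fun n => by simpa [innerSL_apply_norm] using hM n⟩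
  -- the limit R y is in the domain of A and (1 + A) (R y) = y
  have hfull : ∀ y : H, ∃ hy : R y ∈ A.domain, R y + A ⟨R y, hy⟩ = y := by
    intro y
    have hz_eq : ∀ v : A.domain, ⟪y - R y, (v : H)⟫_ℂ = ⟪R y, A v⟫_ℂ := by
      intro v
      obtain ⟨M, hM⟩ := hbound v
      have l1 : Tendsto (fun n => (inner ℂ (C n y) (A v : H) : ℂ)) atTop
          (nhds (inner ℂ (R y) (A v : H))) := (hR y).inner tendsto_const_nhds
      have hdec : ∀ n, (inner ℂ (C n y) (A v : H) : ℂ)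
          = inner ℂ (C n y - R y) ((A v : H) - B n ↑v) + inner ℂ (R y) ((A v : H) - B n ↑v)
            + inner ℂ (y - C n y) (v : H) := by
        intro n
        have hsa : ContinuousLinearMap.adjoint (B n) = B n := by
          rw [← ContinuousLinearMap.star_eq_adjoint]; exact (hBpos' n).isSelfAdjoint
        have hsw : (inner ℂ (C n y) (B n ↑v) : ℂ) = inner ℂ (B n (C n y)) (v : H) := by
          conv_rhs => rw [← hsa]
          rw [ContinuousLinearMap.adjoint_inner_left]
        rw [inner_sub_left, inner_sub_right, inner_sub_right, inner_sub_left, hsw,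
          hBC n y, inner_sub_left]
        ring
      have t1 : Tendsto (fun n => (inner ℂ (C n y - R y) ((A v : H) - B n ↑v) : ℂ)) atTop
          (nhds 0) := by
        refine squeeze_zero_norm (a := fun n => ‖C n y - R y‖ * (‖(A v : H)‖ + M))
          (fun n => ?_) ?_
        · 
          calc ‖(inner ℂ (C n y - R y) ((A v : H) - B n ↑v) : ℂ)‖
              ≤ ‖C n y - R y‖ * ‖(A v : H) - B n ↑v‖ := norm_inner_le_norm _ _
            _ ≤ ‖C n y - R y‖ * (‖(A v : H)‖ + M) := by
                refine mul_le_mul_of_nonneg_left ?_ (norm_nonneg _)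
                calc ‖(A v : H) - B n ↑v‖ ≤ ‖(A v : H)‖ + ‖B n ↑v‖ := norm_sub_le _ _
                  _ ≤ ‖(A v : H)‖ + M := by linarith [hM n]
        · have hto0 : Tendsto (fun n => ‖C n y - R y‖) atTop (nhds 0) := by
            simpa using (tendsto_sub_nhds_zero_iff.mpr (hR y)).norm
          simpa using hto0.mul_const (‖(A v : H)‖ + M)
      have t2 : Tendsto (fun n => (inner ℂ (R y) ((A v : H) - B n ↑v) : ℂ)) atTop (nhds 0) := by
        have := (tendsto_const_nhds (x := (inner ℂ (R y) (A v : H) : ℂ))).sub (hBweak v (R y))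
        rw [sub_self] at this
        simpa [inner_sub_right] using this
      have t3 : Tendsto (fun n => (inner ℂ (y - C n y) (v : H) : ℂ)) atTop
          (nhds (inner ℂ (y - R y) (v : H))) :=
        ((tendsto_const_nhds (x := y)).sub (hR y)).inner tendsto_const_nhds
      have lsum : Tendsto (fun n => (inner ℂ (C n y) (A v : H) : ℂ)) atTop
          (nhds (inner ℂ (y - R y) (v : H))) := by
        have := (t1.add t2).add t3
        rw [add_zero, zero_add] at this
        exact this.congr (fun n => (hdec n).symm)
      exact (tendsto_nhds_unique l1 lsum).symm
    have hmem : R y ∈ A.adjoint.domain :=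
      LinearPMap.mem_adjoint_domain_of_exists _ ⟨y - R y, fun v => hz_eq v⟩
    have hval : A.adjoint ⟨R y, hmem⟩ = y - R y :=
      LinearPMap.adjoint_apply_eq hAdense ⟨R y, hmem⟩ (fun v => hz_eq v)
    rw [← hAdj]
    exact ⟨hmem, by rw [hval]; abel⟩
  -- injectivity of 1 + A
  have hinj : ∀ p q : A.domain, (p : H) + A p = (q : H) + A q → (p : H) = (q : H) := by
    intro p q hpq
    have hd : ((p - q : A.domain) : H) + A (p - q) = 0 := by
      rw [A.map_sub, AddSubgroupClass.coe_sub]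
      rw [sub_add_sub_comm, hpq, sub_self]
    have h0 : Complex.re ⟪((p - q : A.domain) : H), ((p - q : A.domain) : H) + A (p - q)⟫_ℂ
        = 0 := by rw [hd, inner_zero_right, Complex.zero_re]
    rw [inner_add_right] at h0
    have h5 : Complex.re ⟪((p - q : A.domain) : H), ((p - q : A.domain) : H)⟫_ℂ
        = ‖((p - q : A.domain) : H)‖ ^ 2 := by
      simpa using inner_self_eq_norm_sq (𝕜 := ℂ) ((p - q : A.domain) : H)
    have h6 : (0:ℝ) ≤ Complex.re ⟪((p - q : A.domain) : H), A (p - q)⟫_ℂ := by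
      have := hApos (p - q); rw [Complex.le_def] at this; simpa using this.1
    rw [Complex.add_re, h5] at h0
    have h7 : ‖((p - q : A.domain) : H)‖ ^ 2 = 0 := by nlinarith [sq_nonneg ‖((p - q : A.domain) : H)‖]
    have h8 : ((p - q : A.domain) : H) = 0 := by
      rwa [pow_eq_zero_iff (by norm_num), norm_eq_zero] at h7
    rw [AddSubgroupClass.coe_sub, sub_eq_zero] at h8
    exact h8
  refine ⟨fun n => ⟨C n, hCl n, hCr n⟩, R, ?_, ?_, hfull⟩
  · intro C' hC' y
    have hCeq : ∀ n, C' n = C n := fun n => left_inv_eq_right_inv (hC' n).1 (hCr n)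
    have : (fun n => C' n y) = fun n => C n y := funext fun n => by rw [hCeq n]
    rw [this]
    exact hR y
  · intro x
    obtain ⟨hy, hval⟩ := hfull ((x : H) + A x)
    exact hinj ⟨_, hy⟩ x hval
end

section
/- Let 𝔄 be a unital C*-algebra and φ a state on 𝔄. Suppose there is a directed family (𝔄_i)_{i∈I} of closed unital *-subalgebras of 𝔄 (I directed and i ≤ j implies 𝔄_i ⊆ 𝔄_j) whose union is dense in 𝔄, together with linear maps E_i : 𝔄 → 𝔄 such that for each i: (a) E_i is positive (a ≥ 0 implies E_i(a) ≥ 0) and contractive (‖E_i(a)‖ ≤ ‖a‖ for all a), (b) the range of E_i is contained in 𝔄_i and E_i(a) = a for all a ∈ 𝔄_i, (c) φ ∘ E_i = φ, and (d) the restriction of φ to 𝔄_i is faithful. Then φ is faithful on 𝔄: if a ≥ 0 and φ(a) = 0 then a = 0. -/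
open scoped ComplexOrder

/-- Let `𝔄` be a unital C*-algebra and `φ` a state on `𝔄`.  Suppose there is
a directed family of closed unital *-subalgebras `S i` with dense union, together with linear
maps `E i : 𝔄 → 𝔄` which are positive and contractive, have range in `S i`, restrict to the
identity on `S i`, satisfy `φ ∘ E i = φ`, and such that `φ` is faithful on each `S i`.
Then `φ` is faithful on `𝔄`. -/
theorem state_faithful_of_conditional_expectations
    {𝔄 : Type*} [NormedRing 𝔄] [StarRing 𝔄] [CStarRing 𝔄] [CompleteSpace 𝔄]
    [NormedAlgebra ℂ 𝔄] [StarModule ℂ 𝔄] [PartialOrder 𝔄] [StarOrderedRing 𝔄]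
    (φ : 𝔄 →ₗ[ℂ] ℂ) (hφ1 : φ 1 = 1) (hφpos : ∀ a : 𝔄, 0 ≤ a → 0 ≤ φ a)
    {I : Type*} [Preorder I] (hIdir : ∀ i j : I, ∃ k, i ≤ k ∧ j ≤ k)
    (S : I → StarSubalgebra ℂ 𝔄)
    (hSmono : ∀ i j, i ≤ j → S i ≤ S j)
    (hSclosed : ∀ i, IsClosed (S i : Set 𝔄))
    (hSdense : Dense (⋃ i, (S i : Set 𝔄)))
    (E : I → (𝔄 →ₗ[ℂ] 𝔄))
    (hEpos : ∀ i, ∀ a : 𝔄, 0 ≤ a → 0 ≤ E i a)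
    (hEcontr : ∀ i, ∀ a : 𝔄, ‖E i a‖ ≤ ‖a‖)
    (hErange : ∀ i, ∀ a, E i a ∈ S i)
    (hEid : ∀ i, ∀ a ∈ S i, E i a = a)
    (hEinv : ∀ i, ∀ a, φ (E i a) = φ a)
    (hfaith : ∀ i, ∀ a ∈ S i, 0 ≤ a → φ a = 0 → a = 0) :
    ∀ a : 𝔄, 0 ≤ a → φ a = 0 → a = 0 := by
  intro a ha hφa
  have hE0 : ∀ i, E i a = 0 := fun i =>
    hfaith i _ (hErange i a) (hEpos i a ha) (by rw [hEinv]; exact hφa)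
  have key : ∀ ε : ℝ, 0 < ε → ‖a‖ ≤ 2 * ε := by
    intro ε hε
    obtain ⟨b, hbball, hbmem⟩ := Metric.dense_iff.mp hSdense a ε hε
    obtain ⟨i, hbi⟩ := Set.mem_iUnion.mp hbmem
    have h1 : E i (b - a) = b := by
      rw [map_sub, hE0 i, hEid i b hbi, sub_zero]
    have h2 := hEcontr i (b - a)
    rw [h1] at h2
    have h3 : ‖a - b‖ < ε := by
      rw [← dist_eq_norm, dist_comm]; exact hbball
    have h4 : ‖b - a‖ = ‖a - b‖ := norm_sub_rev b a
    calc ‖a‖ = ‖(a - b) + b‖ := by rw [sub_add_cancel]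
      _ ≤ ‖a - b‖ + ‖b‖ := norm_add_le _ _
      _ ≤ ε + ε := by linarith
      _ = 2 * ε := by ring
  have : ‖a‖ ≤ 0 := by
    by_contra h
    push_neg at h
    have := key (‖a‖ / 4) (by linarith)
    linarith
  exact norm_le_zero_iff.mp this
end

section
/- The Gibbs state ρ satisfies: (i) ρ(a_k) = 0, ρ(a_kᴴ) = 0 and ρ(n_k) = 1/(1 + e^{β(ε_k − μ)}) for every site k ∈ Fin n; (ii) ρ factorizes over sites: if for each k ∈ Fin n the matrix A_k lies in the linear span of {1, a_k, a_kᴴ, n_k}, then ρ(A_0 A_1 ⋯ A_{n−1}) = ∏_{k} ρ(A_k), the product of the A_k being taken in increasing order of sites. -/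
open Matrix

noncomputable section JW

/-- The operator algebra of `n` fermionic sites: `2^n × 2^n` complex matrices, with the
index set realized as `Fin n → Fin 2` (the tensor-product basis). -/
abbrev FermionAlg (n : ℕ) := Matrix (Fin n → Fin 2) (Fin n → Fin 2) ℂ

/-- Jordan–Wigner annihilation operator at site `k`:
`a_k = σ₃^{⊗ k} ⊗ σ⁻ ⊗ 1₂^{⊗ (n−k−1)}`, with `σ⁻ = [[0,0],[1,0]]` and
`σ₃ = [[1,0],[0,−1]]`, written entrywise in the tensor-product basis
(the entry of a tensor product at `(v, w)` is the product of the entries of the factors). -/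
def jwA (n : ℕ) (k : Fin n) : FermionAlg n :=
  Matrix.of fun v w => ∏ j : Fin n,
    if j < k then (if v j = w j then (-1 : ℂ) ^ (v j : ℕ) else 0)
    else if j = k then (if v j = 1 ∧ w j = 0 then 1 else 0)
    else (if v j = w j then 1 else 0)

/-- The number operator `n_k = a_kᴴ a_k`. -/
def numOp (n : ℕ) (k : Fin n) : FermionAlg n := (jwA n k)ᴴ * jwA n k

/-- The grading unitary `G = ∏_k (1 − 2 n_k)`. -/
def grading (n : ℕ) : FermionAlg n :=
  (List.ofFn fun k : Fin n => (1 - 2 • numOp n k)).prod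

/-- The free energy `F = Σ_k (ε_k − μ) n_k`. -/
def freeEnergy (n : ℕ) (ε : Fin n → ℝ) (μ : ℝ) : FermionAlg n :=
  ∑ k, ((ε k - μ : ℝ) : ℂ) • numOp n k

/-- The Gibbs state `ρ(A) = Tr(exp(−βF)·A)/Tr(exp(−βF))`. -/
def gibbs (n : ℕ) (ε : Fin n → ℝ) (μ β : ℝ) (A : FermionAlg n) : ℂ :=
  ((NormedSpace.exp ((-(β : ℂ)) • freeEnergy n ε μ)) * A).trace /
    (NormedSpace.exp ((-(β : ℂ)) • freeEnergy n ε μ)).trace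

end JW

noncomputable section AuxJW

open Matrix

variable {n : ℕ}

/-- master factorization identity -/
lemma master (g : Fin n → Fin 2 → ℂ) :
    ∑ v : Fin n → Fin 2, ∏ j, g j (v j) = ∏ j, ∑ x, g j x :=
  (Fintype.prod_sum (fun i j => g i j)).symm

/-- entrywise tensor product of one-site matrices -/
def PM (n : ℕ) (m : Fin n → Matrix (Fin 2) (Fin 2) ℂ) : FermionAlg n :=
  Matrix.of fun v w => ∏ j, m j (v j) (w j)

lemma PM_mul (m m' : Fin n → Matrix (Fin 2) (Fin 2) ℂ) :
    PM n m * PM n m' = PM n fun j => m j * m' j := by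
  ext v w
  simp only [PM, Matrix.mul_apply, Matrix.of_apply]
  rw [← master (fun j x => m j (v j) x * m' j x (w j))]
  exact Finset.sum_congr rfl fun u _ => (Finset.prod_mul_distrib).symm

lemma PM_conj (m : Fin n → Matrix (Fin 2) (Fin 2) ℂ) :
    (PM n m)ᴴ = PM n fun j => (m j)ᴴ := by
  ext v w
  simp only [conjTranspose_apply, PM, Matrix.of_apply, star_prod]

def siteA (k : Fin n) : Fin n → Matrix (Fin 2) (Fin 2) ℂ := fun j =>
  if j < k then Matrix.of fun x y => if x = y then (-1 : ℂ) ^ (x : ℕ) else 0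
  else if j = k then Matrix.of fun x y => if x = 1 ∧ y = 0 then 1 else 0
  else Matrix.of fun x y => if x = y then 1 else 0

lemma jwA_eq (k : Fin n) : jwA n k = PM n (siteA k) := by
  ext v w
  simp only [jwA, PM, siteA, Matrix.of_apply]
  refine Finset.prod_congr rfl fun j _ => ?_
  split_ifs <;> simp_all [Matrix.of_apply] <;> (try (split_ifs <;> simp_all))

lemma numOp_eq (k : Fin n) :
    numOp n k = Matrix.diagonal (fun v => if v k = (0 : Fin 2) then (1 : ℂ) else 0) := by
  have h2 : ∀ j, (siteA (n := n) k j)ᴴ * siteA k j =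
      if j = k then Matrix.of (fun x y : Fin 2 => if x = y ∧ x = 0 then (1 : ℂ) else 0)
      else 1 := by
    intro j
    by_cases hj : j = k
    · subst hj
      rcases lt_irrefl j with _
      ext x y
      fin_cases x <;> fin_cases y <;>
        simp [siteA, Matrix.mul_apply, Fin.sum_univ_two, Matrix.conjTranspose_apply]
    · by_cases hlt : j < k <;>
        · ext x y
          fin_cases x <;> fin_cases y <;>
            simp [siteA, hj, hlt, Matrix.mul_apply, Fin.sum_univ_two,
              Matrix.conjTranspose_apply, Matrix.one_apply]
  have h : numOp n k = PM n (fun j => (siteA k j)ᴴ * siteA k j) := by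
    rw [numOp, jwA_eq, PM_conj, PM_mul]
  rw [h]
  ext v w
  simp only [PM, Matrix.of_apply]
  by_cases hvw : v = w
  · subst hvw
    rw [Matrix.diagonal_apply_eq]
    rw [Finset.prod_eq_single k]
    · rw [h2, if_pos rfl]; simp
    · intro j _ hjk; rw [h2, if_neg hjk, Matrix.one_apply_eq]
    · intro h; exact absurd (Finset.mem_univ k) h
  · rw [Matrix.diagonal_apply_ne _ hvw]
    obtain ⟨j, hj⟩ := Function.ne_iff.mp hvw
    refine Finset.prod_eq_zero (Finset.mem_univ j) ?_
    rw [h2]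
    by_cases hjk : j = k
    · rw [if_pos hjk]; simp only [Matrix.of_apply]
      rw [if_neg]; rintro ⟨h1, -⟩; exact hj h1
    · rw [if_neg hjk]; exact Matrix.one_apply_ne hj

lemma jwA_diag (k : Fin n) (v : Fin n → Fin 2) : jwA n k v v = 0 := by
  refine Finset.prod_eq_zero (Finset.mem_univ k) ?_
  simp [lt_irrefl]
  intro h h'
  rw [h] at h'; exact absurd h' (by decide)

variable (β μ : ℝ) (ε : Fin n → ℝ)

def wgt (k : Fin n) (x : Fin 2) : ℂ :=
  if x = 0 then Complex.exp (-(β : ℂ) * ((ε k - μ : ℝ) : ℂ)) else 1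

lemma freeEnergy_eq :
    freeEnergy n ε μ = Matrix.diagonal
      (fun v => ∑ k, ((ε k - μ : ℝ) : ℂ) * (if v k = (0 : Fin 2) then 1 else 0)) := by
  ext v w
  simp only [freeEnergy, Matrix.sum_apply, Matrix.smul_apply, numOp_eq]
  by_cases hvw : v = w
  · subst hvw
    simp [Matrix.diagonal_apply_eq, smul_eq_mul]
  · simp [Matrix.diagonal_apply_ne _ hvw]

lemma expF_eq :
    NormedSpace.exp ((-(β : ℂ)) • freeEnergy n ε μ)
      = Matrix.diagonal (fun v => ∏ k, wgt β μ ε k (v k)) := by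
  rw [freeEnergy_eq, ← Matrix.diagonal_smul, Matrix.exp_diagonal]
  refine congrArg Matrix.diagonal (funext fun v => ?_)
  rw [Pi.coe_exp, Pi.smul_apply, smul_eq_mul, ← Complex.exp_eq_exp_ℂ, Finset.mul_sum,
    Complex.exp_sum]
  refine Finset.prod_congr rfl fun k _ => ?_
  by_cases h : v k = 0 <;> simp [wgt, h]

lemma gibbs_eq (A : FermionAlg n) :
    gibbs n ε μ β A = (∑ v : Fin n → Fin 2, (∏ k, wgt β μ ε k (v k)) * A v v)
      / ∑ v : Fin n → Fin 2, ∏ k, wgt β μ ε k (v k) := by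
  rw [gibbs, expF_eq, Matrix.trace_diagonal]
  congr 1
  simp only [Matrix.trace, Matrix.diag_apply, Matrix.diagonal_mul]

lemma wgt_zero (k : Fin n) :
    wgt β μ ε k 0 = ((Real.exp (-(β * (ε k - μ))) : ℝ) : ℂ) := by
  rw [wgt, if_pos rfl, Complex.ofReal_exp]
  congr 1
  push_cast
  ring

lemma Zc_eq (k : Fin n) :
    ∑ x, wgt β μ ε k x = ((Real.exp (-(β * (ε k - μ))) + 1 : ℝ) : ℂ) := by
  rw [Fin.sum_univ_two, wgt_zero]
  norm_num [wgt]

lemma Zc_ne (k : Fin n) : ∑ x, wgt β μ ε k x ≠ 0 := by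
  rw [Zc_eq]
  rw [Complex.ofReal_ne_zero]
  positivity

lemma gibbs_single (k : Fin n) (A : FermionAlg n) (f : Fin 2 → ℂ)
    (hf : ∀ v, A v v = f (v k)) :
    gibbs n ε μ β A = (∑ x, wgt β μ ε k x * f x) / (∑ x, wgt β μ ε k x) := by
  classical
  rw [gibbs_eq]
  have key : ∀ F : Fin 2 → ℂ,
      ∑ v : Fin n → Fin 2, (∏ j, wgt β μ ε j (v j)) * F (v k)
        = (∑ x, wgt β μ ε k x * F x) * ∏ j ∈ Finset.univ.erase k, ∑ x, wgt β μ ε j x := by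
    intro F
    have h1 : ∀ v : Fin n → Fin 2,
        (∏ j, (if j = k then wgt β μ ε j (v j) * F (v j) else wgt β μ ε j (v j)))
          = (∏ j, wgt β μ ε j (v j)) * F (v k) := by
      intro v
      rw [← Finset.mul_prod_erase Finset.univ
          (fun j => if j = k then wgt β μ ε j (v j) * F (v j) else wgt β μ ε j (v j))
          (Finset.mem_univ k),
        ← Finset.mul_prod_erase Finset.univ (fun j => wgt β μ ε j (v j)) (Finset.mem_univ k),
        if_pos rfl,
        show (∏ j ∈ Finset.univ.erase k,
            (if j = k then wgt β μ ε j (v j) * F (v j) else wgt β μ ε j (v j)))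
          = ∏ j ∈ Finset.univ.erase k, wgt β μ ε j (v j) from
          Finset.prod_congr rfl fun j hj => if_neg (Finset.mem_erase.mp hj).1]
      ring
    calc ∑ v : Fin n → Fin 2, (∏ j, wgt β μ ε j (v j)) * F (v k)
        = ∑ v : Fin n → Fin 2,
            ∏ j, (if j = k then wgt β μ ε j (v j) * F (v j) else wgt β μ ε j (v j)) :=
          Finset.sum_congr rfl fun v _ => (h1 v).symm
      _ = ∏ j, ∑ x, (if j = k then wgt β μ ε j x * F x else wgt β μ ε j x) :=
          master (fun j x => if j = k then wgt β μ ε j x * F x else wgt β μ ε j x)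
      _ = _ := by
          rw [← Finset.mul_prod_erase Finset.univ
            (fun j => ∑ x, (if j = k then wgt β μ ε j x * F x else wgt β μ ε j x))
            (Finset.mem_univ k)]
          congr 1
          · simp
          · exact Finset.prod_congr rfl fun j hj =>
              Finset.sum_congr rfl fun x _ => if_neg (Finset.mem_erase.mp hj).1
  have hnum := key f
  have hden := key (fun _ => 1)
  simp only [mul_one] at hden
  simp only [hf]
  rw [hnum, hden, mul_div_mul_right]
  exact Finset.prod_ne_zero_iff.mpr fun j _ => Zc_ne β μ ε j

lemma gibbs_jwA (k : Fin n) : gibbs n ε μ β (jwA n k) = 0 := by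
  rw [gibbs_single β μ ε k _ (fun _ => 0) (fun v => jwA_diag k v)]
  simp

lemma jwAH_diag (k : Fin n) (v : Fin n → Fin 2) : (jwA n k)ᴴ v v = 0 := by
  rw [Matrix.conjTranspose_apply, jwA_diag, star_zero]

lemma gibbs_jwAH (k : Fin n) : gibbs n ε μ β (jwA n k)ᴴ = 0 := by
  rw [gibbs_single β μ ε k _ (fun _ => 0) (fun v => jwAH_diag k v)]
  simp

lemma numOp_diag (k : Fin n) (v : Fin n → Fin 2) :
    numOp n k v v = (if v k = 0 then 1 else 0) := by
  rw [numOp_eq, Matrix.diagonal_apply_eq]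

lemma gibbs_numOp (k : Fin n) :
    gibbs n ε μ β (numOp n k) = ((1 / (1 + Real.exp (β * (ε k - μ))) : ℝ) : ℂ) := by
  rw [gibbs_single β μ ε k _ (fun x => if x = 0 then 1 else 0) (fun v => numOp_diag k v)]
  have hnum : ∑ x : Fin 2, wgt β μ ε k x * (if x = 0 then 1 else 0)
      = ((Real.exp (-(β * (ε k - μ))) : ℝ) : ℂ) := by
    rw [Fin.sum_univ_two, wgt_zero β μ ε k]
    norm_num
  rw [hnum, Zc_eq, ← Complex.ofReal_div]
  congr 1
  have he : (0:ℝ) < Real.exp (β * (ε k - μ)) := Real.exp_pos _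
  rw [Real.exp_neg]
  field_simp

def Qp (k : Fin n) (A : FermionAlg n) : Prop :=
  ∀ v w : Fin n → Fin 2, (∃ j, j ≠ k ∧ v j ≠ w j) → A v w = 0

def Rp (k : Fin n) (A : FermionAlg n) : Prop :=
  ∀ v : Fin n → Fin 2, A v v = A (fun _ => v k) (fun _ => v k)

lemma Qp_one (k : Fin n) : Qp k (1 : FermionAlg n) := by
  rintro v w ⟨j, -, hj⟩
  exact Matrix.one_apply_ne fun h => hj (congrFun h j)

lemma Qp_jwA (k : Fin n) : Qp k (jwA n k) := by
  rintro v w ⟨j, hjk, hj⟩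
  simp only [jwA, Matrix.of_apply]
  refine Finset.prod_eq_zero (Finset.mem_univ j) ?_
  by_cases h : j < k
  · rw [if_pos h, if_neg hj]
  · rw [if_neg h, if_neg hjk, if_neg hj]

lemma Qp_jwAH (k : Fin n) : Qp k (jwA n k)ᴴ := by
  rintro v w ⟨j, hjk, hj⟩
  rw [Matrix.conjTranspose_apply, Qp_jwA k w v ⟨j, hjk, fun h => hj h.symm⟩, star_zero]

lemma Qp_numOp (k : Fin n) : Qp k (numOp n k) := by
  rintro v w ⟨j, hjk, hj⟩
  rw [numOp_eq, Matrix.diagonal_apply_ne]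
  exact fun h => hj (congrFun h j)

lemma Qp_span (k : Fin n) (A : FermionAlg n)
    (hA : A ∈ Submodule.span ℂ
      ({1, jwA n k, (jwA n k)ᴴ, numOp n k} : Set (FermionAlg n))) : Qp k A := by
  induction hA using Submodule.span_induction with
  | mem x hx =>
    simp only [Set.mem_insert_iff, Set.mem_singleton_iff] at hx
    rcases hx with rfl | rfl | rfl | rfl
    · exact Qp_one k
    · exact Qp_jwA k
    · exact Qp_jwAH k
    · exact Qp_numOp k
  | zero => intro v w _; rfl
  | add x y hx hy ihx ihy =>
    intro v w h
    rw [Matrix.add_apply, ihx v w h, ihy v w h, add_zero]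
  | smul a x hx ih =>
    intro v w h
    rw [Matrix.smul_apply, ih v w h, smul_zero]

lemma Rp_span (k : Fin n) (A : FermionAlg n)
    (hA : A ∈ Submodule.span ℂ
      ({1, jwA n k, (jwA n k)ᴴ, numOp n k} : Set (FermionAlg n))) : Rp k A := by
  induction hA using Submodule.span_induction with
  | mem x hx =>
    simp only [Set.mem_insert_iff, Set.mem_singleton_iff] at hx
    rcases hx with rfl | rfl | rfl | rfl
    · intro v; rw [Matrix.one_apply_eq, Matrix.one_apply_eq]
    · intro v; rw [jwA_diag, jwA_diag]
    · intro v; rw [jwAH_diag, jwAH_diag]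
    · intro v; rw [numOp_diag, numOp_diag]
  | zero => intro v; rfl
  | add x y hx hy ihx ihy =>
    intro v
    rw [Matrix.add_apply, Matrix.add_apply, ihx v, ihy v]
  | smul a x hx ih =>
    intro v
    rw [Matrix.smul_apply, Matrix.smul_apply, ih v]

def mixL (v w : Fin n → Fin 2) (m : ℕ) : Fin n → Fin 2 := fun j =>
  if m ≤ (j : ℕ) then v j else w j

lemma prod_entry (A : Fin n → FermionAlg n) (hA : ∀ k, Qp k (A k)) :
    ∀ l : List (Fin n), l.Pairwise (· < ·) → ∀ v w : Fin n → Fin 2,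
      ((l.map A).prod) v w =
        if ∀ j, j ∉ l → v j = w j
        then (l.map fun k => A k (mixL v w (k : ℕ)) (mixL v w ((k : ℕ) + 1))).prod
        else 0 := by
  intro l
  induction l with
  | nil =>
    intro _ v w
    simp only [List.map_nil, List.prod_nil, List.not_mem_nil]
    by_cases h : v = w
    · subst h
      rw [Matrix.one_apply_eq, if_pos (fun j _ => rfl)]
    · rw [Matrix.one_apply_ne h, if_neg]
      intro hc
      exact h (funext fun j => hc j (by simp))
  | cons k t ih =>
    intro hp v w
    have hkt : ∀ k' ∈ t, k < k' := (List.pairwise_cons.mp hp).1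
    have ht := (List.pairwise_cons.mp hp).2
    have hknt : k ∉ t := fun h => lt_irrefl k (hkt k h)
    rw [List.map_cons, List.prod_cons, Matrix.mul_apply]
    rw [Finset.sum_eq_single (Function.update v k (w k))]
    · rw [ih ht (Function.update v k (w k)) w]
      by_cases C : ∀ j, j ∉ k :: t → v j = w j
      · have hcond : ∀ j, j ∉ t → Function.update v k (w k) j = w j := by
          intro j hj
          by_cases hjk : j = k
          · subst hjk; rw [Function.update_self]
          · rw [Function.update_of_ne hjk]
            refine C j ?_
            simp only [List.mem_cons, not_or]
            exact ⟨hjk, hj⟩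
        rw [if_pos hcond, if_pos C, List.map_cons, List.prod_cons]
        have hnotin : ∀ j : Fin n, (j : ℕ) < (k : ℕ) → v j = w j := by
          intro j hj
          refine C j ?_
          simp only [List.mem_cons, not_or]
          constructor
          · intro h; rw [h] at hj; omega
          · intro h
            have := Fin.lt_def.mp (hkt j h)
            omega
        have hm1 : mixL v w (k : ℕ) = v := by
          funext j
          simp only [mixL]
          by_cases h : (k : ℕ) ≤ (j : ℕ)
          · rw [if_pos h]
          · rw [if_neg h]
            exact (hnotin j (by omega)).symm
        have hm2 : mixL v w ((k : ℕ) + 1) = Function.update v k (w k) := by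
          funext j
          simp only [mixL]
          by_cases h : (k : ℕ) + 1 ≤ (j : ℕ)
          · rw [if_pos h, Function.update_of_ne]
            intro hjk
            rw [hjk] at h
            omega
          · rw [if_neg h]
            by_cases hjk : j = k
            · subst hjk; rw [Function.update_self]
            · rw [Function.update_of_ne hjk]
              have hjlt : (j : ℕ) < (k : ℕ) := by
                rcases lt_or_eq_of_le (by omega : (j : ℕ) ≤ (k : ℕ)) with h' | h'
                · exact h'
                · exact absurd (Fin.ext h') hjk
              exact (hnotin j hjlt).symm
        rw [hm1, hm2]
        congr 1
        refine congrArg List.prod (List.map_congr_left fun k' hk' => ?_)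
        have hkk' : (k : ℕ) < (k' : ℕ) := Fin.lt_def.mp (hkt k' hk')
        have e1 : mixL (Function.update v k (w k)) w (k' : ℕ) = mixL v w (k' : ℕ) := by
          funext j
          simp only [mixL]
          by_cases h : (k' : ℕ) ≤ (j : ℕ)
          · rw [if_pos h, if_pos h, Function.update_of_ne]
            intro hjk
            rw [hjk] at h
            omega
          · rw [if_neg h, if_neg h]
        have e2 : mixL (Function.update v k (w k)) w ((k' : ℕ) + 1)
            = mixL v w ((k' : ℕ) + 1) := by
          funext j
          simp only [mixL]
          by_cases h : (k' : ℕ) + 1 ≤ (j : ℕ)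
          · rw [if_pos h, if_pos h, Function.update_of_ne]
            intro hjk
            rw [hjk] at h
            omega
          · rw [if_neg h, if_neg h]
        rw [e1, e2]
      · rw [if_neg C]
        push_neg at C
        obtain ⟨j₀, hj₀m, hj₀⟩ := C
        have hj₀k : j₀ ≠ k := fun h => hj₀m (h ▸ List.mem_cons_self (a := k) (l := t))
        have hj₀t : j₀ ∉ t := fun h => hj₀m (List.mem_cons_of_mem _ h)
        rw [if_neg, mul_zero]
        intro hc
        have := hc j₀ hj₀t
        rw [Function.update_of_ne hj₀k] at this
        exact hj₀ this
    · intro u _ hu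
      obtain ⟨j, hj⟩ := Function.ne_iff.mp hu
      by_cases hjk : j = k
      · subst hjk
        rw [Function.update_self] at hj
        rw [ih ht u w, if_neg, mul_zero]
        intro hc
        exact hj (hc j hknt)
      · rw [Function.update_of_ne hjk] at hj
        rw [hA k v u ⟨j, hjk, fun h => hj h.symm⟩, zero_mul]
    · intro h
      exact absurd (Finset.mem_univ _) h

lemma prod_diag (A : Fin n → FermionAlg n) (hA : ∀ k, Qp k (A k)) (v : Fin n → Fin 2) :
    ((List.ofFn A).prod) v v = ∏ k, A k v v := by
  rw [List.ofFn_eq_map, prod_entry A hA (List.finRange n) (List.pairwise_lt_finRange n) v v,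
    if_pos (fun j _ => rfl)]
  have hmix : ∀ m, mixL (n := n) v v m = v := fun m =>
    funext fun j => by simp only [mixL]; split_ifs <;> rfl
  simp only [hmix]
  rw [← List.ofFn_eq_map, Fin.prod_ofFn]

end AuxJW

/-- The Gibbs state `ρ` for the free energy `F = Σ_k (ε_k − μ) n_k`
satisfies (i) `ρ(a_k) = 0`, `ρ(a_kᴴ) = 0` and `ρ(n_k) = 1/(1 + e^{β(ε_k − μ)})` for every
site `k`, and (ii) it factorizes over sites: if each `A k` lies in the span of
`{1, a_k, a_kᴴ, n_k}`, then `ρ(A_0 A_1 ⋯ A_{n−1}) = ∏_k ρ(A_k)` (the product of the `A_k`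
being taken in increasing order of sites). -/
theorem gibbs_state_values_and_factorization
    (n : ℕ) (hn : 1 ≤ n) (β μ : ℝ) (hβ : 0 < β) (ε : Fin n → ℝ) :
    (∀ k : Fin n, gibbs n ε μ β (jwA n k) = 0) ∧
    (∀ k : Fin n, gibbs n ε μ β (jwA n k)ᴴ = 0) ∧
    (∀ k : Fin n, gibbs n ε μ β (numOp n k)
      = ((1 / (1 + Real.exp (β * (ε k - μ))) : ℝ) : ℂ)) ∧
    (∀ A : Fin n → FermionAlg n,
      (∀ k : Fin n, A k ∈ Submodule.span ℂ
        ({1, jwA n k, (jwA n k)ᴴ, numOp n k} : Set (FermionAlg n))) →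
      gibbs n ε μ β (List.ofFn A).prod = ∏ k : Fin n, gibbs n ε μ β (A k)) := by
  refine ⟨fun k => gibbs_jwA β μ ε k, fun k => gibbs_jwAH β μ ε k,
    fun k => gibbs_numOp β μ ε k, ?_⟩
  intro A hA
  have hQ : ∀ k, Qp k (A k) := fun k => Qp_span k (A k) (hA k)
  have hR : ∀ k, Rp k (A k) := fun k => Rp_span k (A k) (hA k)
  have hfd : ∀ k (v : Fin n → Fin 2),
      A k v v = A k (fun _ => v k) (fun _ => v k) := fun k => hR k
  rw [gibbs_eq]
  have hnum : ∑ v : Fin n → Fin 2, (∏ k, wgt β μ ε k (v k)) * ((List.ofFn A).prod v v)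
      = ∏ k, ∑ x, wgt β μ ε k x * A k (fun _ => x) (fun _ => x) := by
    calc ∑ v : Fin n → Fin 2, (∏ k, wgt β μ ε k (v k)) * ((List.ofFn A).prod v v)
        = ∑ v : Fin n → Fin 2,
            ∏ k, (wgt β μ ε k (v k) * A k (fun _ => v k) (fun _ => v k)) := by
          refine Finset.sum_congr rfl fun v _ => ?_
          rw [prod_diag A hQ v, ← Finset.prod_mul_distrib]
          exact Finset.prod_congr rfl fun k _ => by rw [hfd k v]
      _ = _ := master (fun k x => wgt β μ ε k x * A k (fun _ => x) (fun _ => x))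
  have hden : ∑ v : Fin n → Fin 2, ∏ k, wgt β μ ε k (v k) = ∏ k, ∑ x, wgt β μ ε k x :=
    master (fun k x => wgt β μ ε k x)
  rw [hnum, hden, ← Finset.prod_div_distrib]
  refine Finset.prod_congr rfl fun k _ => ?_
  exact (gibbs_single β μ ε k (A k) (fun x => A k (fun _ => x) (fun _ => x)) (hfd k)).symm
end

section
/- For every t ∈ ℝ and every site k ∈ Fin n, exp(i t F) · a_k · exp(−i t F) = e^{−i t (ε_k − μ)} · a_k and exp(i t F) · a_kᴴ · exp(−i t F) = e^{i t (ε_k − μ)} · a_kᴴ; in particular each n_k, and hence every element of the commutative subalgebra generated by {n_k}, is invariant under the Heisenberg dynamics A ↦ exp(itF) A exp(−itF) generated by the free energy F. -/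
open Matrix

namespace HDAux

lemma fin2 (x : Fin 2) : x = 0 ∨ x = 1 := by omega

/-- sign factor -/
noncomputable def sgn (n : ℕ) (k : Fin n) (v : Fin n → Fin 2) : ℂ :=
  ∏ j : Fin n, (if j < k then (-1 : ℂ) ^ (v j : ℕ) else 1)

lemma sgn_mul_sgn (n : ℕ) (k : Fin n) (v : Fin n → Fin 2) :
    sgn n k v * sgn n k v = 1 := by
  rw [sgn, ← Finset.prod_mul_distrib]
  apply Finset.prod_eq_one
  intro j _
  split_ifs with h
  · rw [← mul_pow]; norm_num
  · norm_num

lemma conj_sgn (n : ℕ) (k : Fin n) (v : Fin n → Fin 2) :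
    star (sgn n k v) = sgn n k v := by
  rw [sgn, star_prod]
  apply Finset.prod_congr rfl
  intro j _
  split_ifs with h <;> simp

lemma jwA_eq (n : ℕ) (k : Fin n) (v w : Fin n → Fin 2) :
    jwA n k v w = if v k = 1 ∧ w k = 0 ∧ ∀ j, j ≠ k → v j = w j
      then sgn n k v else 0 := by
  show (∏ j : Fin n,
    if j < k then (if v j = w j then (-1 : ℂ) ^ (v j : ℕ) else 0)
    else if j = k then (if v j = 1 ∧ w j = 0 then 1 else 0)
    else (if v j = w j then 1 else 0)) = _
  split_ifs with h
  · obtain ⟨h1, h2, h3⟩ := h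
    apply Finset.prod_congr rfl
    intro j _
    by_cases hj : j < k
    · simp [hj, h3 j (ne_of_lt hj)]
    · by_cases hk : j = k
      · subst hk; simp [hj, h1, h2]
      · simp [hj, hk, h3 j hk]
  · push_neg at h
    by_cases h1 : v k = 1
    · by_cases h2 : w k = 0
      · obtain ⟨j, hj, hne⟩ := h h1 h2
        apply Finset.prod_eq_zero (Finset.mem_univ j)
        by_cases hlt : j < k
        · simp [hlt, hne]
        · simp [hlt, hj, hne]
      · apply Finset.prod_eq_zero (Finset.mem_univ k)
        simp [h2]
    · apply Finset.prod_eq_zero (Finset.mem_univ k)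
      simp [h1]

lemma numOp_eq (n : ℕ) (k : Fin n) :
    numOp n k = Matrix.diagonal (fun v => if v k = 0 then 1 else 0) := by
  ext v w
  rw [numOp, Matrix.mul_apply]
  simp only [Matrix.conjTranspose_apply, jwA_eq]
  by_cases hvw : v = w
  · subst hvw
    rw [Matrix.diagonal_apply_eq]
    by_cases hv : v k = 0
    · rw [if_pos hv]
      rw [Finset.sum_eq_single (Function.update v k 1)]
      · have hc : (Function.update v k 1) k = 1 ∧ v k = 0 ∧
            ∀ j, j ≠ k → (Function.update v k 1) j = v j := by
          refine ⟨Function.update_self _ _ _, hv, fun j hj => Function.update_of_ne hj _ _⟩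
        rw [if_pos hc, conj_sgn, sgn_mul_sgn]
      · intro u _ hu
        rw [if_neg, star_zero, zero_mul]
        rintro ⟨hu1, _, hu3⟩
        apply hu
        funext j
        by_cases hj : j = k
        · subst hj; rw [hu1, Function.update_self]
        · rw [hu3 j hj, Function.update_of_ne hj]
      · intro h; exact absurd (Finset.mem_univ _) h
    · rw [if_neg hv]
      apply Finset.sum_eq_zero
      intro u _
      rw [if_neg, star_zero, zero_mul]
      rintro ⟨_, h2, _⟩; exact hv h2
  · rw [Matrix.diagonal_apply_ne _ hvw]
    apply Finset.sum_eq_zero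
    intro u _
    by_cases h1 : u k = 1 ∧ v k = 0 ∧ ∀ j, j ≠ k → u j = v j
    · rw [mul_comm, if_neg, zero_mul]
      rintro ⟨hu1, hw2, hu3⟩
      apply hvw
      funext j
      by_cases hj : j = k
      · subst hj; rw [h1.2.1, hw2]
      · rw [← h1.2.2 j hj, hu3 j hj]
    · rw [if_neg h1, star_zero, zero_mul]


/-- diagonal of the free energy -/
noncomputable def dval (n : ℕ) (ε : Fin n → ℝ) (μ : ℝ) (v : Fin n → Fin 2) : ℂ :=
  ∑ k : Fin n, ((ε k - μ : ℝ) : ℂ) * (if v k = 0 then 1 else 0)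

lemma freeEnergy_eq (n : ℕ) (ε : Fin n → ℝ) (μ : ℝ) :
    freeEnergy n ε μ = Matrix.diagonal (dval n ε μ) := by
  ext v w
  simp only [freeEnergy, Matrix.sum_apply, Matrix.smul_apply, numOp_eq, smul_eq_mul]
  by_cases h : v = w
  · subst h
    simp [Matrix.diagonal_apply_eq, dval]
  · simp [Matrix.diagonal_apply_ne _ h]

lemma exp_smul_free (n : ℕ) (ε : Fin n → ℝ) (μ : ℝ) (z : ℂ) :
    NormedSpace.exp (z • freeEnergy n ε μ)
      = Matrix.diagonal (fun v => Complex.exp (z * dval n ε μ v)) := by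
  rw [freeEnergy_eq, ← Matrix.diagonal_smul, Matrix.exp_diagonal]
  have : NormedSpace.exp (z • dval n ε μ) = fun v => Complex.exp (z * dval n ε μ v) := by
    funext v
    rw [Pi.coe_exp, Pi.smul_apply, smul_eq_mul, Complex.exp_eq_exp_ℂ]
  rw [this]

lemma dval_diff (n : ℕ) (ε : Fin n → ℝ) (μ : ℝ) (k : Fin n) (v w : Fin n → Fin 2)
    (h1 : v k = 1) (h2 : w k = 0) (h3 : ∀ j, j ≠ k → v j = w j) :
    dval n ε μ w - dval n ε μ v = ((ε k - μ : ℝ) : ℂ) := by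
  rw [dval, dval, ← Finset.sum_sub_distrib]
  rw [Finset.sum_eq_single k]
  · rw [h1, h2]; norm_num
  · intro j _ hj
    rw [h3 j hj, sub_self]
  · intro h; exact absurd (Finset.mem_univ _) h


lemma conj_jwA (n : ℕ) (ε : Fin n → ℝ) (μ : ℝ) (k : Fin n) (z : ℂ) :
    Matrix.diagonal (fun v => Complex.exp (z * dval n ε μ v)) * jwA n k *
      Matrix.diagonal (fun v => Complex.exp (-z * dval n ε μ v))
    = Complex.exp (-(z * ((ε k - μ : ℝ) : ℂ))) • jwA n k := by
  ext v w
  rw [Matrix.smul_apply, Matrix.mul_diagonal, Matrix.diagonal_mul, jwA_eq]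
  split_ifs with h
  · have hd := dval_diff n ε μ k v w h.1 h.2.1 h.2.2
    have he : Complex.exp (z * dval n ε μ v) * Complex.exp (-z * dval n ε μ w)
        = Complex.exp (-(z * ((ε k - μ : ℝ) : ℂ))) := by
      rw [← Complex.exp_add]
      congr 1
      linear_combination (-z) * hd
    rw [smul_eq_mul, mul_right_comm, he]
  · simp

lemma conj_jwA_star (n : ℕ) (ε : Fin n → ℝ) (μ : ℝ) (k : Fin n) (z : ℂ) :
    Matrix.diagonal (fun v => Complex.exp (z * dval n ε μ v)) * (jwA n k)ᴴ *
      Matrix.diagonal (fun v => Complex.exp (-z * dval n ε μ v))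
    = Complex.exp (z * ((ε k - μ : ℝ) : ℂ)) • (jwA n k)ᴴ := by
  ext v w
  rw [Matrix.smul_apply, Matrix.mul_diagonal, Matrix.diagonal_mul,
    Matrix.conjTranspose_apply, jwA_eq]
  split_ifs with h
  · have hd := dval_diff n ε μ k w v h.1 h.2.1 h.2.2
    have he : Complex.exp (z * dval n ε μ v) * Complex.exp (-z * dval n ε μ w)
        = Complex.exp (z * ((ε k - μ : ℝ) : ℂ)) := by
      rw [← Complex.exp_add]
      congr 1
      linear_combination z * hd
    rw [smul_eq_mul, mul_right_comm, he]
  · simp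

lemma DmulD (n : ℕ) (ε : Fin n → ℝ) (μ : ℝ) (z w : ℂ) (h : z + w = 0) :
    Matrix.diagonal (fun v => Complex.exp (z * dval n ε μ v)) *
      Matrix.diagonal (fun v => Complex.exp (w * dval n ε μ v)) = 1 := by
  rw [Matrix.diagonal_mul_diagonal]
  have : (fun v => Complex.exp (z * dval n ε μ v) * Complex.exp (w * dval n ε μ v))
      = fun _ => (1 : ℂ) := by
    funext v
    rw [← Complex.exp_add,
      show z * dval n ε μ v + w * dval n ε μ v = 0 by linear_combination (dval n ε μ v) * h,
      Complex.exp_zero]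
  rw [this, Matrix.diagonal_one]

lemma conj_numOp (n : ℕ) (ε : Fin n → ℝ) (μ : ℝ) (k : Fin n) (z : ℂ) :
    Matrix.diagonal (fun v => Complex.exp (z * dval n ε μ v)) * numOp n k *
      Matrix.diagonal (fun v => Complex.exp (-z * dval n ε μ v)) = numOp n k := by
  rw [numOp_eq, Matrix.diagonal_mul_diagonal, Matrix.diagonal_mul_diagonal]
  have : (fun v => (Complex.exp (z * dval n ε μ v) * if v k = 0 then (1:ℂ) else 0) *
      Complex.exp (-z * dval n ε μ v)) = fun v => if v k = 0 then (1:ℂ) else 0 := by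
    funext v
    rw [mul_right_comm, ← Complex.exp_add,
      show z * dval n ε μ v + -z * dval n ε μ v = 0 by ring, Complex.exp_zero, one_mul]
  rw [this]

end HDAux

/-- For every `t ∈ ℝ` and every site `k`,
`exp(itF) a_k exp(−itF) = e^{−it(ε_k − μ)} a_k` and
`exp(itF) a_kᴴ exp(−itF) = e^{it(ε_k − μ)} a_kᴴ`; in particular every `n_k`, and hence
every element of the commutative subalgebra generated by the `n_k`, is invariant under
the Heisenberg dynamics `A ↦ exp(itF) A exp(−itF)` generated by the free energy `F`. -/
theorem heisenberg_dynamics_on_fermions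
    (n : ℕ) (hn : 1 ≤ n) (μ : ℝ) (ε : Fin n → ℝ) :
    (∀ t : ℝ, ∀ k : Fin n,
      NormedSpace.exp ((Complex.I * t) • freeEnergy n ε μ) * jwA n k *
        NormedSpace.exp ((-(Complex.I * t)) • freeEnergy n ε μ)
      = Complex.exp (-(Complex.I * t * ((ε k : ℂ) - μ))) • jwA n k) ∧
    (∀ t : ℝ, ∀ k : Fin n,
      NormedSpace.exp ((Complex.I * t) • freeEnergy n ε μ) * (jwA n k)ᴴ *
        NormedSpace.exp ((-(Complex.I * t)) • freeEnergy n ε μ)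
      = Complex.exp (Complex.I * t * ((ε k : ℂ) - μ)) • (jwA n k)ᴴ) ∧
    (∀ t : ℝ, ∀ k : Fin n,
      NormedSpace.exp ((Complex.I * t) • freeEnergy n ε μ) * numOp n k *
        NormedSpace.exp ((-(Complex.I * t)) • freeEnergy n ε μ) = numOp n k) ∧
    (∀ t : ℝ, ∀ A ∈ Algebra.adjoin ℂ (Set.range (numOp n)),
      NormedSpace.exp ((Complex.I * t) • freeEnergy n ε μ) * A *
        NormedSpace.exp ((-(Complex.I * t)) • freeEnergy n ε μ) = A) := by
  have hcast : ∀ k : Fin n, ((ε k - μ : ℝ) : ℂ) = (ε k : ℂ) - (μ : ℂ) := by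
    intro k; push_cast; ring
  have h3 : ∀ t : ℝ, ∀ k : Fin n,
      NormedSpace.exp ((Complex.I * t) • freeEnergy n ε μ) * numOp n k *
        NormedSpace.exp ((-(Complex.I * t)) • freeEnergy n ε μ) = numOp n k := by
    intro t k
    rw [HDAux.exp_smul_free, HDAux.exp_smul_free]
    exact HDAux.conj_numOp n ε μ k (Complex.I * t)
  refine ⟨?_, ?_, h3, ?_⟩
  · intro t k
    rw [HDAux.exp_smul_free, HDAux.exp_smul_free, ← hcast k]
    exact HDAux.conj_jwA n ε μ k (Complex.I * t)
  · intro t k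
    rw [HDAux.exp_smul_free, HDAux.exp_smul_free, ← hcast k]
    exact HDAux.conj_jwA_star n ε μ k (Complex.I * t)
  · intro t A hA
    rw [HDAux.exp_smul_free, HDAux.exp_smul_free]
    set U := Matrix.diagonal (fun v => Complex.exp ((Complex.I * t) * HDAux.dval n ε μ v)) with hU
    set V := Matrix.diagonal (fun v => Complex.exp ((-(Complex.I * t)) * HDAux.dval n ε μ v)) with hV
    have hUV : U * V = 1 := HDAux.DmulD n ε μ _ _ (by ring)
    have hVU : V * U = 1 := HDAux.DmulD n ε μ _ _ (by ring)
    induction hA using Algebra.adjoin_induction with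
    | mem x hx =>
      obtain ⟨k, rfl⟩ := hx
      rw [hU, hV]
      exact HDAux.conj_numOp n ε μ k (Complex.I * t)
    | algebraMap r =>
      rw [Algebra.algebraMap_eq_smul_one, mul_smul_comm, mul_one, smul_mul_assoc, hUV]
    | add x y hx hy ihx ihy =>
      rw [mul_add, add_mul, ihx, ihy]
    | mul x y hx hy ihx ihy =>
      have h2 : V * (U * (y * V)) = y * V := by rw [← mul_assoc, hVU, one_mul]
      calc U * (x * y) * V = (U * x * V) * (U * y * V) := by
            simp only [mul_assoc]; rw [h2]
        _ = x * y := by rw [ihx, ihy]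
end

section
/- Under the detailed-balance assumptions, the Gibbs state ρ is D-invariant: ρ(D(A)) = 0 for every homogeneous A ∈ M_m(ℂ). -/
open Matrix

lemma exp_semiconj {m : ℕ} (X Y P : Matrix (Fin m) (Fin m) ℂ) (h : X * P = P * Y) :
    NormedSpace.exp X * P = P * NormedSpace.exp Y := by
  letI : SeminormedRing (Matrix (Fin m) (Fin m) ℂ) := Matrix.linftyOpSemiNormedRing
  letI : NormedRing (Matrix (Fin m) (Fin m) ℂ) := Matrix.linftyOpNormedRing
  letI : NormedAlgebra ℂ (Matrix (Fin m) (Fin m) ℂ) := Matrix.linftyOpNormedAlgebra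
  have hn : ∀ n : ℕ, X ^ n * P = P * Y ^ n := by
    intro n
    induction n with
    | zero => simp
    | succ k ih => rw [pow_succ, pow_succ, mul_assoc, h, ← mul_assoc, ih, mul_assoc]
  simp only [NormedSpace.exp_eq_tsum ℂ]
  have hs := NormedSpace.expSeries_summable' (𝕂 := ℂ) X
  have hs' := NormedSpace.expSeries_summable' (𝕂 := ℂ) Y
  erw [← hs.tsum_mul_right P, ← hs'.tsum_mul_left P]
  congr 1; funext n
  rw [smul_mul_assoc, hn, mul_smul_comm]

lemma exp_shift {m : ℕ} (X P : Matrix (Fin m) (Fin m) ℂ) (c : ℂ)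
    (h : X * P = P * X + c • P) :
    NormedSpace.exp X * P = Complex.exp c • (P * NormedSpace.exp X) := by
  letI : SeminormedRing (Matrix (Fin m) (Fin m) ℂ) := Matrix.linftyOpSemiNormedRing
  letI : NormedRing (Matrix (Fin m) (Fin m) ℂ) := Matrix.linftyOpNormedRing
  letI : NormedAlgebra ℂ (Matrix (Fin m) (Fin m) ℂ) := Matrix.linftyOpNormedAlgebra
  have hsc : X * P = P * (X + c • 1) := by
    rw [mul_add, mul_smul_comm, mul_one, h]
  have hone : NormedSpace.exp (c • (1 : Matrix (Fin m) (Fin m) ℂ))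
      = Complex.exp c • (1 : Matrix (Fin m) (Fin m) ℂ) := by
    rw [← Algebra.algebraMap_eq_smul_one]
    erw [← NormedSpace.algebraMap_exp_comm]
    rw [Algebra.algebraMap_eq_smul_one, ← Complex.exp_eq_exp_ℂ]
  have hcomm : Commute X (c • (1 : Matrix (Fin m) (Fin m) ℂ)) :=
    (Commute.one_right X).smul_right c
  rw [exp_semiconj X _ P hsc, Matrix.exp_add_of_commute _ _ hcomm, hone]
  rw [mul_smul_comm, mul_one, mul_smul_comm]

/-- Let `F ∈ M_m(ℂ)` be self-adjoint, `ρ` the associated Gibbs state at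
inverse temperature `β`, `G` a self-adjoint grading unitary commuting with `F`, and
`(L γ)_{γ ∈ J}` a finite family of homogeneous jump operators satisfying the eigenoperator
relation `FL_γ − L_γF = ε_γ L_γ` and the β-KMS (detailed balance) relation
`L_γᴴ = e^{−βε_γ/2} L_γ̄` for an involution `γ ↦ γ̄` with `ε_γ̄ = −ε_γ`, `d_γ̄ = d_γ`.
Then the Gibbs state is `D`-invariant: `ρ(D(A)) = 0` for every homogeneous `A`, where
`D(A) = Σ_γ ( ½(L_γᴴ L_γ A + A L_γᴴ L_γ) − (−1)^{d_γ d_A} L_γᴴ A L_γ )`. -/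
theorem gibbs_dissipator_invariant
    (m : ℕ) (hm : 1 ≤ m) (β : ℝ) (hβ : 0 < β)
    (F : Matrix (Fin m) (Fin m) ℂ) (hF : Fᴴ = F)
    (G : Matrix (Fin m) (Fin m) ℂ) (hGsa : Gᴴ = G) (hGunit : G * G = 1)
    (hGF : G * F * G = F)
    (J : Type*) [Fintype J]
    (bar : J → J) (hbar : ∀ γ, bar (bar γ) = γ)
    (ε : J → ℝ) (hε : ∀ γ, ε (bar γ) = -ε γ)
    (L : J → Matrix (Fin m) (Fin m) ℂ)
    (d : J → ℕ) (hd : ∀ γ, d γ ≤ 1) (hdbar : ∀ γ, d (bar γ) = d γ)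
    (hLhom : ∀ γ, G * L γ * G = ((-1 : ℂ) ^ (d γ)) • L γ)
    (hLeig : ∀ γ, F * L γ - L γ * F = ((ε γ : ℝ) : ℂ) • L γ)
    (hLKMS : ∀ γ, (L γ)ᴴ = ((Real.exp (-(β * ε γ) / 2) : ℝ) : ℂ) • L (bar γ))
    (A : Matrix (Fin m) (Fin m) ℂ) (dA : ℕ) (hdA : dA ≤ 1)
    (hA : G * A * G = ((-1 : ℂ) ^ dA) • A) :
    (NormedSpace.exp ((-(β : ℂ)) • F) *
        (∑ γ, ((1 / 2 : ℂ) • ((L γ)ᴴ * L γ * A + A * ((L γ)ᴴ * L γ))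
          - ((-1 : ℂ) ^ (d γ * dA)) • ((L γ)ᴴ * A * L γ)))).trace /
      (NormedSpace.exp ((-(β : ℂ)) • F)).trace = 0 := by
  classical
  set X : Matrix (Fin m) (Fin m) ℂ := (-(β : ℂ)) • F with hXdef
  set E : Matrix (Fin m) (Fin m) ℂ := NormedSpace.exp X with hEdef
  -- (a) E semicommutes with L γ
  have ha : ∀ γ, E * L γ = Complex.exp ((-(β : ℂ)) * (ε γ : ℂ)) • (L γ * E) := by
    intro γ
    apply exp_shift
    have h1 : F * L γ = ((ε γ : ℝ) : ℂ) • L γ + L γ * F := sub_eq_iff_eq_add.mp (hLeig γ)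
    rw [hXdef, smul_mul_assoc, h1, mul_smul_comm]
    module
  -- L γ * E in terms of E * L γ
  have ha' : ∀ γ, L γ * E = Complex.exp ((β : ℂ) * (ε γ : ℂ)) • (E * L γ) := by
    intro γ
    rw [ha γ, smul_smul, ← Complex.exp_add]
    have h0 : (β : ℂ) * (ε γ : ℂ) + (-(β : ℂ)) * (ε γ : ℂ) = 0 := by ring
    rw [h0, Complex.exp_zero, one_smul]
  -- (b) E semicommutes with (L γ)ᴴ
  have hb : ∀ γ, E * (L γ)ᴴ = Complex.exp ((β : ℂ) * (ε γ : ℂ)) • ((L γ)ᴴ * E) := by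
    intro γ
    apply exp_shift
    have h1 := congrArg conjTranspose (hLeig γ)
    simp only [conjTranspose_sub, conjTranspose_mul, conjTranspose_smul, hF,
      Complex.star_def, Complex.conj_ofReal] at h1
    -- h1 : (L γ)ᴴ * F - F * (L γ)ᴴ = (ε γ : ℂ) • (L γ)ᴴ
    have h2 : F * (L γ)ᴴ = (L γ)ᴴ * F - ((ε γ : ℝ) : ℂ) • (L γ)ᴴ := by
      rw [← h1]; abel
    rw [hXdef, smul_mul_assoc, h2, mul_smul_comm]
    module
  -- (c) E commutes with M γ := (L γ)ᴴ * L γ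
  have hcomm : ∀ γ, E * ((L γ)ᴴ * L γ) = ((L γ)ᴴ * L γ) * E := by
    intro γ
    calc E * ((L γ)ᴴ * L γ) = (E * (L γ)ᴴ) * L γ := by rw [mul_assoc]
      _ = Complex.exp ((β : ℂ) * (ε γ : ℂ)) • ((L γ)ᴴ * (E * L γ)) := by
          rw [hb γ, smul_mul_assoc, mul_assoc]
      _ = Complex.exp ((β : ℂ) * (ε γ : ℂ)) •
            ((Complex.exp ((-(β : ℂ)) * (ε γ : ℂ))) • ((L γ)ᴴ * (L γ * E))) := by
          rw [ha γ, mul_smul_comm]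
      _ = ((L γ)ᴴ * L γ) * E := by
          rw [smul_smul, ← Complex.exp_add]
          have h0 : (β : ℂ) * (ε γ : ℂ) + (-(β : ℂ)) * (ε γ : ℂ) = 0 := by ring
          rw [h0, Complex.exp_zero, one_smul, mul_assoc]
  -- half-term identity
  have half : ∀ γ, (E * (A * ((L γ)ᴴ * L γ))).trace = (E * ((L γ)ᴴ * L γ * A)).trace := by
    intro γ
    rw [← mul_assoc, Matrix.trace_mul_comm, ← mul_assoc, ← hcomm γ, mul_assoc E]
  -- cross-term identity
  have cross : ∀ γ, (E * ((L γ)ᴴ * A * L γ)).trace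
      = (E * ((L (bar γ))ᴴ * L (bar γ) * A)).trace := by
    intro γ
    have hLL : L γ * (L γ)ᴴ
        = ((Real.exp (-(β * ε γ)) : ℝ) : ℂ) • ((L (bar γ))ᴴ * L (bar γ)) := by
      have hLe : L γ = ((Real.exp (-(β * ε γ) / 2) : ℝ) : ℂ) • (L (bar γ))ᴴ := by
        have h := congrArg conjTranspose (hLKMS γ)
        rw [conjTranspose_conjTranspose, conjTranspose_smul] at h
        rw [h]
        congr 1
        exact Complex.conj_ofReal _
      rw [hLKMS γ, hLe, smul_mul_assoc, mul_smul_comm, smul_smul]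
      congr 1
      norm_cast
      rw [← Real.exp_add]
      congr 1
      ring
    calc (E * ((L γ)ᴴ * A * L γ)).trace = ((E * ((L γ)ᴴ * A)) * L γ).trace := by
          rw [← mul_assoc, ← mul_assoc]
      _ = (L γ * (E * ((L γ)ᴴ * A))).trace := Matrix.trace_mul_comm _ _
      _ = ((L γ * E) * ((L γ)ᴴ * A)).trace := by rw [mul_assoc]
      _ = (Complex.exp ((β : ℂ) * (ε γ : ℂ)) • ((E * L γ) * ((L γ)ᴴ * A))).trace := by
          rw [ha' γ, smul_mul_assoc]
      _ = (Complex.exp ((β : ℂ) * (ε γ : ℂ)) • (E * ((L γ * (L γ)ᴴ) * A))).trace := by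
          simp only [mul_assoc]
      _ = ((Complex.exp ((β : ℂ) * (ε γ : ℂ)) * ((Real.exp (-(β * ε γ)) : ℝ) : ℂ)) •
            (E * ((L (bar γ))ᴴ * L (bar γ) * A))).trace := by
          rw [hLL, smul_mul_assoc, mul_smul_comm, smul_smul]
      _ = (E * ((L (bar γ))ᴴ * L (bar γ) * A)).trace := by
          rw [Complex.ofReal_exp, ← Complex.exp_add]
          have h0 : (β : ℂ) * (ε γ : ℂ) + ((-(β * ε γ) : ℝ) : ℂ) = 0 := by
            push_cast; ring
          rw [h0, Complex.exp_zero, one_smul]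
  -- parity: G-conjugation facts
  have hGFc : G * F = F * G := by
    have h2 : G * F * G * G = F * G := by rw [hGF]
    rwa [mul_assoc (G * F), hGunit, mul_one] at h2
  have hGE : G * E = E * G := by
    exact (((show Commute G F from hGFc).smul_right (-(β : ℂ))).exp_right).eq
  have hconj : ∀ P Q : Matrix (Fin m) (Fin m) ℂ,
      G * (P * Q) * G = (G * P * G) * (G * Q * G) := by
    intro P Q
    simp only [mul_assoc]
    rw [← mul_assoc G G, hGunit, one_mul]
  have hGEc : G * E * G = E := by
    rw [hGE, mul_assoc, hGunit, mul_one]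
  have hGLH : ∀ γ, G * (L γ)ᴴ * G = ((-1 : ℂ) ^ (d γ)) • (L γ)ᴴ := by
    intro γ
    have := congrArg conjTranspose (hLhom γ)
    simpa [conjTranspose_mul, conjTranspose_smul, hGsa, mul_assoc] using this
  have hGM : ∀ γ, G * ((L γ)ᴴ * L γ) * G = (L γ)ᴴ * L γ := by
    intro γ
    rw [hconj, hGLH γ, hLhom γ, smul_mul_assoc, mul_smul_comm, smul_smul]
    have h1 : ((-1 : ℂ) ^ (d γ)) * ((-1 : ℂ) ^ (d γ)) = 1 := by
      rcases Nat.le_one_iff_eq_zero_or_eq_one.mp (hd γ) with h | h <;> simp [h]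
    rw [h1, one_smul]
  have hT0 : ∀ γ, dA = 1 → (E * ((L γ)ᴴ * L γ * A)).trace = 0 := by
    intro γ hdA1
    have h3 : G * (E * ((L γ)ᴴ * L γ * A)) * G
        = ((-1 : ℂ) ^ dA) • (E * ((L γ)ᴴ * L γ * A)) := by
      rw [hconj, hGEc, hconj, hGM γ, hA, mul_smul_comm, mul_smul_comm]
    have h4 : (G * (E * ((L γ)ᴴ * L γ * A)) * G).trace
        = (E * ((L γ)ᴴ * L γ * A)).trace := by
      rw [Matrix.trace_mul_comm, ← mul_assoc, hGunit, one_mul]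
    rw [h3, Matrix.trace_smul, hdA1, pow_one, neg_one_smul] at h4
    linear_combination (-(1 / 2 : ℂ)) * h4
  -- assemble
  suffices hnum : (E * (∑ γ, ((1 / 2 : ℂ) • ((L γ)ᴴ * L γ * A + A * ((L γ)ᴴ * L γ))
      - ((-1 : ℂ) ^ (d γ * dA)) • ((L γ)ᴴ * A * L γ)))).trace = 0 by
    rw [hnum, zero_div]
  rw [Finset.mul_sum, Matrix.trace_sum]
  have expand : ∀ γ, (E * ((1 / 2 : ℂ) • ((L γ)ᴴ * L γ * A + A * ((L γ)ᴴ * L γ))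
        - ((-1 : ℂ) ^ (d γ * dA)) • ((L γ)ᴴ * A * L γ))).trace
      = (E * ((L γ)ᴴ * L γ * A)).trace
        - ((-1 : ℂ) ^ (d γ * dA)) * (E * ((L (bar γ))ᴴ * L (bar γ) * A)).trace := by
    intro γ
    rw [mul_sub, mul_smul_comm, mul_smul_comm, Matrix.trace_sub, Matrix.trace_smul,
      Matrix.trace_smul, mul_add, Matrix.trace_add, half γ, cross γ]
    simp only [smul_eq_mul]
    ring
  simp only [expand]
  rw [Finset.sum_sub_distrib]
  have hbij : Function.Bijective bar := Function.Involutive.bijective hbar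
  have reidx : ∑ γ, ((-1 : ℂ) ^ (d γ * dA)) * (E * ((L (bar γ))ᴴ * L (bar γ) * A)).trace
      = ∑ γ, ((-1 : ℂ) ^ (d γ * dA)) * (E * ((L γ)ᴴ * L γ * A)).trace := by
    refine Fintype.sum_bijective bar hbij _ _ ?_
    intro γ
    rw [hdbar]
  rw [reidx]
  rw [← Finset.sum_sub_distrib]
  apply Finset.sum_eq_zero
  intro γ _
  rcases Nat.le_one_iff_eq_zero_or_eq_one.mp hdA with h | h
  · simp [h]
  · rcases Nat.le_one_iff_eq_zero_or_eq_one.mp (hd γ) with h2 | h2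
    · simp [h2]
    · rw [hT0 γ h]; ring
end

section
/- Let 𝔠 ⊆ M be the commutative unital subalgebra generated by {n_k : k ∈ Fin n}, and let K = { A ∈ 𝔠 : ρ(A) = 0 } be the subspace of elements of 𝔠 orthogonal to the identity in the GNS inner product. Then the family { σ_Z : Z a nonempty subset of Fin n } is an orthonormal basis of K with respect to ⟨A, B⟩ = ρ(Aᴴ B). -/
open Matrix

noncomputable section

/-- `σ_x = e^{β(ε_x−μ)/2} n_x − e^{−β(ε_x−μ)/2}(1 − n_x)`. -/
def sOp (n : ℕ) (β μ : ℝ) (ε : Fin n → ℝ) (x : Fin n) : FermionAlg n :=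
  ((Real.exp (β * (ε x - μ) / 2) : ℝ) : ℂ) • numOp n x
    - ((Real.exp (-(β * (ε x - μ)) / 2) : ℝ) : ℂ) • (1 - numOp n x)

/-- `σ_Z = σ_{z₁}⋯σ_{z_m}` (empty product = 1). -/
def sProd (n : ℕ) (β μ : ℝ) (ε : Fin n → ℝ) (Z : Finset (Fin n)) : FermionAlg n :=
  ((Z.sort (· ≤ ·)).map (sOp n β μ ε)).prod

namespace SigmaONB
open Finset

variable {n : ℕ}

lemma fin2_cases (x : Fin 2) : x = 0 ∨ x = 1 := by omega

lemma jwA_apply (k : Fin n) (u v : Fin n → Fin 2) :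
    jwA n k u v = if v k = 0 ∧ u = Function.update v k 1 then
      ∏ j ∈ Finset.univ.filter (fun j => j < k), (-1:ℂ)^(v j : ℕ) else 0 := by
  unfold jwA
  rw [Matrix.of_apply]
  split_ifs with h
  · obtain ⟨hv, hu⟩ := h
    subst hu
    rw [Finset.prod_filter]
    refine Finset.prod_congr rfl fun j _ => ?_
    by_cases hj : j < k
    · have hne : j ≠ k := ne_of_lt hj
      simp [hj, Function.update_of_ne hne]
    · by_cases hjk : j = k
      · subst hjk
        simp [hj, Function.update_self, hv]
      · simp [hj, hjk, Function.update_of_ne hjk]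
  · push_neg at h
    by_cases hv : v k = 0
    · have hu := h hv
      have : ∃ j, u j ≠ Function.update v k 1 j := by
        by_contra hc; push_neg at hc; exact hu (funext hc)
      obtain ⟨j, hj⟩ := this
      refine Finset.prod_eq_zero (Finset.mem_univ j) ?_
      by_cases hjk : j = k
      · subst hjk
        rw [Function.update_self] at hj
        simp [lt_irrefl, hj, hv]
      · rw [Function.update_of_ne hjk] at hj
        by_cases hlt : j < k
        · simp [hlt, hj]
        · simp [hlt, hjk, hj]
    · refine Finset.prod_eq_zero (Finset.mem_univ k) ?_
      simp [lt_irrefl, hv]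

lemma numOp_eq (k : Fin n) :
    numOp n k = Matrix.diagonal (fun v => if v k = 0 then 1 else 0) := by
  ext v w
  rw [numOp, Matrix.mul_apply]
  simp only [Matrix.conjTranspose_apply, jwA_apply, Matrix.diagonal_apply]
  by_cases hv : v k = 0
  · by_cases hvw : v = w
    · subst hvw
      rw [Finset.sum_eq_single (Function.update v k 1)]
      · simp only [hv, and_self, if_true, true_and]
        have hs : star (∏ j ∈ Finset.univ.filter (fun j => j < k), (-1:ℂ)^(v j : ℕ))
            = ∏ j ∈ Finset.univ.filter (fun j => j < k), (-1:ℂ)^(v j : ℕ) := by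
          rw [star_prod]
          exact Finset.prod_congr rfl fun j _ => by rw [star_pow, star_neg, star_one]
        rw [hs, ← Finset.prod_mul_distrib]
        refine Finset.prod_eq_one fun j _ => ?_
        rw [← mul_pow]; norm_num
      · intro u _ hu
        simp [hv, hu]
      · intro h; exact absurd (Finset.mem_univ _) h
    · rw [if_neg hvw]
      apply Finset.sum_eq_zero
      intro u _
      by_cases h1 : v k = 0 ∧ u = Function.update v k 1
      · by_cases h2 : w k = 0 ∧ u = Function.update w k 1
        · exfalso
          apply hvw
          funext j
          by_cases hjk : j = k
          · subst hjk; rw [hv, h2.1]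
          · have := congrFun (h1.2.symm.trans h2.2) j
            rwa [Function.update_of_ne hjk, Function.update_of_ne hjk] at this
        · simp [h2]
      · simp [h1]
  · have : ∀ u : Fin n → Fin 2, ¬ (v k = 0 ∧ u = Function.update v k 1) := fun u h => hv h.1
    simp only [this, if_false, star_zero, zero_mul, Finset.sum_const_zero]
    by_cases hvw : v = w
    · subst hvw; simp [hv]
    · simp [hvw]

end SigmaONB
namespace SigmaONB

variable {n : ℕ}

/-- diagonal entries of `sOp`. -/
def sfun (β μ : ℝ) (ε : Fin n → ℝ) (x : Fin n) : Fin 2 → ℂ :=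
  fun b => if b = 0 then ((Real.exp (β * (ε x - μ) / 2) : ℝ) : ℂ)
           else -((Real.exp (-(β * (ε x - μ)) / 2) : ℝ) : ℂ)

/-- per-site Gibbs weight. -/
def wfun (β μ : ℝ) (ε : Fin n → ℝ) (k : Fin n) : Fin 2 → ℂ :=
  fun b => if b = 0 then ((Real.exp (-(β * (ε k - μ))) : ℝ) : ℂ) else 1

def wgt (β μ : ℝ) (ε : Fin n → ℝ) : (Fin n → Fin 2) → ℂ :=
  fun v => ∏ k, wfun β μ ε k (v k)

def fZ (β μ : ℝ) (ε : Fin n → ℝ) (Z : Finset (Fin n)) : (Fin n → Fin 2) → ℂ :=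
  fun v => ∏ x ∈ Z, sfun β μ ε x (v x)

variable (β μ : ℝ) (ε : Fin n → ℝ)

lemma sOp_eq (x : Fin n) :
    sOp n β μ ε x = Matrix.diagonal (fun v => sfun β μ ε x (v x)) := by
  rw [sOp, numOp_eq]
  ext v w
  by_cases hvw : v = w
  · subst hvw
    by_cases h : v x = 0 <;>
      simp [Matrix.diagonal_apply, Matrix.sub_apply, Matrix.smul_apply, Matrix.one_apply, sfun, h]
  · simp [Matrix.diagonal_apply_ne _ hvw, Matrix.sub_apply, Matrix.smul_apply,
      Matrix.one_apply_ne hvw, Matrix.diagonal_apply_ne _ hvw]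

lemma list_prod_diag (l : List (Fin n)) :
    ((l.map (sOp n β μ ε)).prod : FermionAlg n)
      = Matrix.diagonal (fun v => (l.map (fun x => sfun β μ ε x (v x))).prod) := by
  induction l with
  | nil => simp [Matrix.diagonal_one]
  | cons a l ih =>
      simp only [List.map_cons, List.prod_cons, ih, sOp_eq]
      rw [Matrix.diagonal_mul_diagonal]

lemma sProd_eq (Z : Finset (Fin n)) :
    sProd n β μ ε Z = Matrix.diagonal (fZ β μ ε Z) := by
  rw [sProd, list_prod_diag]
  refine congrArg Matrix.diagonal (funext fun v => ?_)
  show _ = ∏ x ∈ Z, sfun β μ ε x (v x)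
  rw [← Finset.prod_map_toList]
  exact List.Perm.prod_eq (List.Perm.map _ (Finset.sort_perm_toList _ _))

end SigmaONB
namespace SigmaONB

variable {n : ℕ} (β μ : ℝ) (ε : Fin n → ℝ)

lemma exp_eq :
    NormedSpace.exp ((-(β : ℂ)) • freeEnergy n ε μ) = Matrix.diagonal (wgt β μ ε) := by
  have h1 : (-(β : ℂ)) • freeEnergy n ε μ = Matrix.diagonal
      (fun v => ∑ k, (-(β : ℂ)) * (((ε k - μ : ℝ) : ℂ) * (if v k = 0 then 1 else 0))) := by
    rw [freeEnergy]
    ext v w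
    by_cases hvw : v = w
    · subst hvw
      simp [Matrix.smul_apply, Matrix.sum_apply, numOp_eq, Matrix.diagonal_apply_eq,
        Finset.mul_sum]
    · simp [Matrix.smul_apply, Matrix.sum_apply, numOp_eq, Matrix.diagonal_apply_ne _ hvw,
        hvw]
  rw [h1, Matrix.exp_diagonal]
  refine congrArg Matrix.diagonal (funext fun v => ?_)
  rw [Pi.exp_def]
  show NormedSpace.exp (∑ k, _) = _
  rw [← Complex.exp_eq_exp_ℂ, Complex.exp_sum]
  refine Finset.prod_congr rfl fun k _ => ?_
  by_cases h : v k = 0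
  · simp only [h, if_true, mul_one, wfun, ← Complex.ofReal_exp]
    push_cast
    ring_nf
  · simp [h, wfun, Complex.exp_zero]

lemma gibbs_diag (f : (Fin n → Fin 2) → ℂ) :
    gibbs n ε μ β (Matrix.diagonal f)
      = (∑ v, wgt β μ ε v * f v) / (∑ v, wgt β μ ε v) := by
  rw [gibbs, exp_eq, Matrix.diagonal_mul_diagonal, Matrix.trace_diagonal, Matrix.trace_diagonal]

lemma sum_prod (G : Fin n → Fin 2 → ℂ) :
    (∑ v : Fin n → Fin 2, ∏ k, G k (v k)) = ∏ k, (G k 0 + G k 1) := by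
  rw [← Fintype.prod_sum]
  exact Finset.prod_congr rfl fun k _ => Fin.sum_univ_two _

lemma sum_wgt : (∑ v, wgt β μ ε v) = ∏ k, (wfun β μ ε k 0 + wfun β μ ε k 1) := by
  simp only [wgt]
  exact sum_prod _

lemma sum_wgt_ne : (∑ v, wgt β μ ε v) ≠ 0 := by
  rw [sum_wgt]
  refine Finset.prod_ne_zero_iff.2 fun k _ => ?_
  have : wfun β μ ε k 0 + wfun β μ ε k 1
      = ((Real.exp (-(β * (ε k - μ))) + 1 : ℝ) : ℂ) := by
    simp [wfun]
  rw [this]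
  norm_cast
  positivity

lemma key (Z Z' : Finset (Fin n)) :
    (∑ v, wgt β μ ε v * (fZ β μ ε Z v * fZ β μ ε Z' v))
      = if Z = Z' then (∑ v, wgt β μ ε v) else 0 := by
  have hL : ∀ v, wgt β μ ε v * (fZ β μ ε Z v * fZ β μ ε Z' v)
      = ∏ k, (wfun β μ ε k (v k) * ((if k ∈ Z then sfun β μ ε k (v k) else 1)
          * (if k ∈ Z' then sfun β μ ε k (v k) else 1))) := by
    intro v
    rw [Finset.prod_mul_distrib, Finset.prod_mul_distrib,
      Fintype.prod_ite_mem, Fintype.prod_ite_mem]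
    rfl
  simp only [hL]
  rw [sum_prod (fun k b => wfun β μ ε k b * ((if k ∈ Z then sfun β μ ε k b else 1)
      * (if k ∈ Z' then sfun β μ ε k b else 1))), sum_wgt]
  by_cases hZZ : Z = Z'
  · subst hZZ
    rw [if_pos rfl]
    refine Finset.prod_congr rfl fun k _ => ?_
    by_cases hk : k ∈ Z
    · simp only [hk, if_true, sfun, wfun, Fin.isValue]
      norm_num
      have e1 : Complex.exp (↑β * (↑(ε k) - ↑μ) / 2) * Complex.exp (↑β * (↑(ε k) - ↑μ) / 2)
          = Complex.exp (↑β * (↑(ε k) - ↑μ)) := by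
        rw [← Complex.exp_add]; exact congrArg Complex.exp (by ring)
      have e2 : Complex.exp (-(↑β * (↑(ε k) - ↑μ)) / 2) * Complex.exp (-(↑β * (↑(ε k) - ↑μ)) / 2)
          = Complex.exp (-(↑β * (↑(ε k) - ↑μ))) := by
        rw [← Complex.exp_add]; exact congrArg Complex.exp (by ring)
      have e3 : Complex.exp (-(↑β * (↑(ε k) - ↑μ))) * Complex.exp (↑β * (↑(ε k) - ↑μ)) = 1 := by
        rw [← Complex.exp_add]
        simp
      rw [e1, e2, e3]
      ring
    · simp [hk]
  · rw [if_neg hZZ]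
    have : ∃ k, ¬ (k ∈ Z ↔ k ∈ Z') := by
      by_contra hc
      push_neg at hc
      exact hZZ (Finset.ext fun k => (hc k))
    obtain ⟨k, hk⟩ := this
    refine Finset.prod_eq_zero (Finset.mem_univ k) ?_
    by_cases h1 : k ∈ Z
    · have h2 : k ∉ Z' := fun h => hk ⟨fun _ => h, fun _ => h1⟩
      simp only [h1, h2, if_true, if_false, sfun, wfun, Fin.isValue]
      norm_num
      rw [← Complex.exp_add]
      rw [show -((β:ℂ) * ((ε k:ℂ) - (μ:ℂ))) + (β:ℂ) * ((ε k:ℂ) - (μ:ℂ)) / 2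
          = -((β:ℂ) * ((ε k:ℂ) - (μ:ℂ))) / 2 from by ring]
      ring
    · have h2 : k ∈ Z' := by
        by_contra h2
        exact hk ⟨fun h => absurd h h1, fun h => absurd h h2⟩
      simp only [h1, h2, if_true, if_false, sfun, wfun, Fin.isValue]
      norm_num
      rw [← Complex.exp_add]
      rw [show -((β:ℂ) * ((ε k:ℂ) - (μ:ℂ))) + (β:ℂ) * ((ε k:ℂ) - (μ:ℂ)) / 2
          = -((β:ℂ) * ((ε k:ℂ) - (μ:ℂ))) / 2 from by ring]
      ring

end SigmaONB
namespace SigmaONB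

variable {n : ℕ} (β μ : ℝ) (ε : Fin n → ℝ)

lemma sum_wgt_fZ (Z : Finset (Fin n)) :
    (∑ v, wgt β μ ε v * fZ β μ ε Z v)
      = if Z = ∅ then (∑ v, wgt β μ ε v) else 0 := by
  have h := key β μ ε Z ∅
  simp only [fZ, Finset.prod_empty, mul_one] at h
  simpa [fZ] using h

lemma sOp_mem (x : Fin n) : sOp n β μ ε x ∈ Algebra.adjoin ℂ (Set.range (numOp n)) := by
  have h : numOp n x ∈ Algebra.adjoin ℂ (Set.range (numOp n)) :=
    Algebra.subset_adjoin ⟨x, rfl⟩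
  exact Subalgebra.sub_mem _ (Subalgebra.smul_mem _ h _)
    (Subalgebra.smul_mem _ (Subalgebra.sub_mem _ (Subalgebra.one_mem _) h) _)

lemma sProd_mem (Z : Finset (Fin n)) :
    sProd n β μ ε Z ∈ Algebra.adjoin ℂ (Set.range (numOp n)) := by
  rw [sProd]
  refine Subalgebra.list_prod_mem _ fun A hA => ?_
  rw [List.mem_map] at hA
  obtain ⟨x, -, rfl⟩ := hA
  exact sOp_mem β μ ε x

lemma star_fZ (Z : Finset (Fin n)) (v : Fin n → Fin 2) :
    star (fZ β μ ε Z v) = fZ β μ ε Z v := by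
  rw [fZ, star_prod]
  refine Finset.prod_congr rfl fun x _ => ?_
  rcases fin2_cases (v x) with h | h
  · simp only [sfun, h, if_true]
    rw [Complex.star_def, Complex.conj_ofReal]
  · simp only [sfun, h, if_neg (show (1 : Fin 2) ≠ 0 by decide)]
    rw [star_neg, Complex.star_def, Complex.conj_ofReal]

lemma star_fZ' (Z : Finset (Fin n)) : star (fZ β μ ε Z) = fZ β μ ε Z :=
  funext fun v => star_fZ β μ ε Z v

lemma gibbs_pair (Z Z' : Finset (Fin n)) :
    gibbs n ε μ β ((sProd n β μ ε Z)ᴴ * sProd n β μ ε Z')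
      = if Z = Z' then 1 else 0 := by
  rw [sProd_eq, sProd_eq, Matrix.diagonal_conjTranspose, star_fZ',
    Matrix.diagonal_mul_diagonal, gibbs_diag]
  rw [key]
  by_cases h : Z = Z'
  · rw [if_pos h, if_pos h, div_self (sum_wgt_ne β μ ε)]
  · rw [if_neg h, if_neg h, zero_div]

lemma fZ_li : LinearIndependent ℂ (fZ β μ ε (n := n)) := by
  rw [Fintype.linearIndependent_iff]
  intro c hc Z'
  have h0 : ∀ v, (∑ Z, c Z * fZ β μ ε Z v) = 0 := by
    intro v
    have := congrFun hc v
    simpa [Finset.sum_apply, Pi.smul_apply, smul_eq_mul] using this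
  have hmain : c Z' * (∑ v, wgt β μ ε v) = 0 := by
    have hstep : (∑ Z, c Z * (if Z' = Z then (∑ v, wgt β μ ε v) else 0))
        = c Z' * (∑ v, wgt β μ ε v) := by
      rw [Finset.sum_eq_single Z'
          (fun Z _ hZ => by rw [if_neg (fun h => hZ h.symm), mul_zero])
          (fun h => absurd (Finset.mem_univ _) h)]
      simp
    calc c Z' * (∑ v, wgt β μ ε v)
        = ∑ Z, c Z * (if Z' = Z then (∑ v, wgt β μ ε v) else 0) := hstep.symm
      _ = ∑ Z, c Z * (∑ v, wgt β μ ε v * (fZ β μ ε Z' v * fZ β μ ε Z v)) := by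
          exact Finset.sum_congr rfl fun Z _ => by rw [key]
      _ = ∑ v, (wgt β μ ε v * fZ β μ ε Z' v) * (∑ Z, c Z * fZ β μ ε Z v) := by
          simp only [Finset.mul_sum]
          rw [Finset.sum_comm]
          exact Finset.sum_congr rfl fun v _ => Finset.sum_congr rfl fun Z _ => by ring
      _ = 0 := by simp [h0]
  exact (mul_eq_zero.1 hmain).resolve_right (sum_wgt_ne β μ ε)

lemma fZ_span : Submodule.span ℂ (Set.range (fZ β μ ε (n := n))) = ⊤ := by
  refine (fZ_li β μ ε).span_eq_top_of_card_eq_finrank ?_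
  simp [Fintype.card_finset, Module.finrank_fintype_fun_eq_card]

end SigmaONB

/-- Let `𝔠 ⊆ M` be the commutative unital subalgebra generated by the
number operators `{n_k}` and let `K = { A ∈ 𝔠 : ρ(A) = 0 }` be the subspace of elements of
`𝔠` orthogonal to the identity in the GNS inner product `⟨A,B⟩ = ρ(AᴴB)`.  Then
`{ σ_Z : Z nonempty subset of Fin n }` is an orthonormal basis of `K`: each `σ_Z` lies in
`K`, the family is orthonormal, and it spans `K`. -/
theorem sigma_orthonormal_basis_of_K
    (n : ℕ) (hn : 1 ≤ n) (β μ : ℝ) (hβ : 0 < β) (ε : Fin n → ℝ) :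
    (∀ Z : Finset (Fin n), Z ≠ ∅ →
      sProd n β μ ε Z ∈ Algebra.adjoin ℂ (Set.range (numOp n)) ∧
      gibbs n ε μ β (sProd n β μ ε Z) = 0) ∧
    (∀ Z Z' : Finset (Fin n), Z ≠ ∅ → Z' ≠ ∅ →
      gibbs n ε μ β ((sProd n β μ ε Z)ᴴ * sProd n β μ ε Z')
        = if Z = Z' then 1 else 0) ∧
    (∀ A : FermionAlg n, A ∈ Algebra.adjoin ℂ (Set.range (numOp n)) →
      gibbs n ε μ β A = 0 →
      A ∈ Submodule.span ℂ
        {B : FermionAlg n | ∃ Z : Finset (Fin n), Z ≠ ∅ ∧ B = sProd n β μ ε Z}) := by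
  classical
  refine ⟨?_, ?_, ?_⟩
  · intro Z hZ
    refine ⟨SigmaONB.sProd_mem β μ ε Z, ?_⟩
    rw [SigmaONB.sProd_eq, SigmaONB.gibbs_diag, SigmaONB.sum_wgt_fZ, if_neg hZ, zero_div]
  · intro Z Z' _ _
    exact SigmaONB.gibbs_pair β μ ε Z Z'
  · intro A hA hgibbs
    have hA' : A ∈ (Matrix.diagonalAlgHom ℂ :
        ((Fin n → Fin 2) → ℂ) →ₐ[ℂ] FermionAlg n).range := by
      refine Algebra.adjoin_le ?_ hA
      rintro _ ⟨k, rfl⟩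
      exact ⟨_, (SigmaONB.numOp_eq k).symm⟩
    obtain ⟨f, hf⟩ := hA'
    replace hf : Matrix.diagonal f = A := hf
    have hfmem : f ∈ Submodule.span ℂ (Set.range (SigmaONB.fZ β μ ε (n := n))) := by
      rw [SigmaONB.fZ_span]; trivial
    obtain ⟨c, hc⟩ := (Submodule.mem_span_range_iff_exists_fun ℂ).1 hfmem
    have hfv : ∀ v, f v = ∑ Z, c Z * SigmaONB.fZ β μ ε Z v := by
      intro v
      have := congrFun hc v
      simpa [Finset.sum_apply, Pi.smul_apply, smul_eq_mul] using this.symm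
    have hnum : (∑ v, SigmaONB.wgt β μ ε v * f v)
        = c ∅ * (∑ v, SigmaONB.wgt β μ ε v) := by
      calc (∑ v, SigmaONB.wgt β μ ε v * f v)
          = ∑ v, ∑ Z, c Z * (SigmaONB.wgt β μ ε v * SigmaONB.fZ β μ ε Z v) := by
            refine Finset.sum_congr rfl fun v _ => ?_
            rw [hfv v, Finset.mul_sum]
            exact Finset.sum_congr rfl fun Z _ => by ring
        _ = ∑ Z, c Z * (∑ v, SigmaONB.wgt β μ ε v * SigmaONB.fZ β μ ε Z v) := by
            rw [Finset.sum_comm]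
            exact Finset.sum_congr rfl fun Z _ => by rw [Finset.mul_sum]
        _ = ∑ Z, c Z * (if Z = ∅ then (∑ v, SigmaONB.wgt β μ ε v) else 0) :=
            Finset.sum_congr rfl fun Z _ => by rw [SigmaONB.sum_wgt_fZ]
        _ = c ∅ * (∑ v, SigmaONB.wgt β μ ε v) := by
            rw [Finset.sum_eq_single ∅ (fun Z _ hZ => by rw [if_neg hZ, mul_zero])
              (fun h => absurd (Finset.mem_univ _) h)]
            simp
    have hgz : gibbs n ε μ β A = c ∅ := by
      rw [← hf, SigmaONB.gibbs_diag, hnum, mul_div_assoc,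
        div_self (SigmaONB.sum_wgt_ne β μ ε), mul_one]
    have hc0 : c ∅ = 0 := by rw [← hgz]; exact hgibbs
    have hAsum : A = ∑ Z : Finset (Fin n), c Z • sProd n β μ ε Z := by
      rw [← hf]
      have hd : Matrix.diagonal f
          = ∑ Z : Finset (Fin n), c Z • Matrix.diagonal (SigmaONB.fZ β μ ε Z) := by
        ext v w
        by_cases hvw : v = w
        · subst hvw
          simp [Matrix.sum_apply, Matrix.smul_apply, Matrix.diagonal_apply_eq, hfv v]
        · simp [Matrix.sum_apply, Matrix.smul_apply, Matrix.diagonal_apply_ne _ hvw]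
      rw [hd]
      exact Finset.sum_congr rfl fun Z _ => by rw [SigmaONB.sProd_eq]
    have hsum' : ∑ Z : Finset (Fin n), c Z • sProd n β μ ε Z
        = ∑ Z ∈ Finset.univ.erase ∅, c Z • sProd n β μ ε Z := by
      rw [← Finset.sum_erase_add _ _ (Finset.mem_univ (∅ : Finset (Fin n))), hc0,
        zero_smul, add_zero]
    rw [hAsum, hsum']
    refine Submodule.sum_mem _ fun Z hZ => ?_
    exact Submodule.smul_mem _ _
      (Submodule.subset_span ⟨Z, (Finset.mem_erase.1 hZ).1, rfl⟩)

end
end
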